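/- arXiv:2308.06495 — 4 statements merged into one kernel-verified Lean document; each statement's English description precedes it below -/
import Mathlib

section
/- Let G : (0,1] → (0,∞) be continuous and increasing with lim_{x→0⁺} G(x) = 0, and satisfying ∫₀^d log log(1/G(x)) dx < ∞ for some d > 0. Let dμ_𝔻(z) = G(1−|z|) dA(z) on 𝔻. Then: (a) for every analytic function f on 𝔻 and every z ∈ 𝔻, |f(z)| ≤ 8·(1−|z|)^{−3}·G((1−|z|)/2)^{−1/2}·(∫_𝔻 |f(w)|² G(1−|w|) dA(w))^{1/2}; and (b) consequently there exists a majorant F on (0,1) (decreasing, tending to +∞ at 0⁺, with ∫₀^δ log F(t) dt < ∞ for some δ > 0) such that |f(z)| ≤ exp(F(1−|z|))·(∫_𝔻 |f|² dμ_𝔻)^{1/2} for all analytic f on 𝔻 and all z ∈ 𝔻. -/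
open MeasureTheory Set Filter Metric Complex
open scoped Real ENNReal Topology

noncomputable section

/-- Normalized area measure on the unit disk (so that A(𝔻) = 1). -/
def mA : Measure ℂ := (ENNReal.ofReal Real.pi)⁻¹ • (volume.restrict (Metric.ball (0:ℂ) 1))

/-- Circle mean value property. -/
lemma circle_mv {g : ℂ → ℂ} {z : ℂ} {ρ : ℝ} (hρ : 0 < ρ)
    (h : DiffContOnCl ℂ g (Metric.ball z ρ)) :
    ∫ θ in (0:ℝ)..(2*Real.pi), g (circleMap z ρ θ) = (2*Real.pi : ℝ) • g z := by
  have key := h.circleIntegral_sub_inv_smul (Metric.mem_ball_self hρ)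
  rw [circleIntegral] at key
  have h1 : ∀ θ ∈ uIcc (0:ℝ) (2*Real.pi),
      deriv (circleMap z ρ) θ • (circleMap z ρ θ - z)⁻¹ • g (circleMap z ρ θ)
      = I * g (circleMap z ρ θ) := by
    intro θ _
    have hne : circleMap 0 ρ θ ≠ 0 := circleMap_ne_center (ne_of_gt hρ)
    rw [deriv_circleMap, circleMap_sub_center, smul_eq_mul, smul_eq_mul]
    field_simp
  rw [intervalIntegral.integral_congr h1, intervalIntegral.integral_const_mul] at key
  have h2 : (2 * (Real.pi:ℂ) * I) • g z = I * ((2*Real.pi : ℝ) • g z) := by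
    simp only [smul_eq_mul, real_smul]
    push_cast
    ring
  rw [h2] at key
  exact mul_left_cancel₀ I_ne_zero key

/-- Area mean value property for holomorphic functions. -/
lemma area_mv {g : ℂ → ℂ} {z : ℂ} {r : ℝ} (hr : 0 < r)
    (hd : DifferentiableOn ℂ g (Metric.ball z r))
    (hc : ContinuousOn g (Metric.closedBall z r)) :
    ∫ w in Metric.ball z r, g w = (Real.pi * r^2 : ℝ) • g z := by
  set h : ℂ → ℂ := (Metric.ball (0:ℂ) r).indicator (fun w => g (z + w)) with hh
  have hsymm : ∀ p : ℝ × ℝ, Complex.polarCoord.symm p = ↑p.1 * (↑(Real.cos p.2) + ↑(Real.sin p.2) * I) :=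
    Complex.polarCoord_symm_apply
  -- step 1 : translate
  have step1 : ∫ p, h p = ∫ w in Metric.ball z r, g w := by
    have e1 : ∀ w : ℂ, h w = (Metric.ball z r).indicator g (z + w) := by
      intro w
      by_cases hw : w ∈ Metric.ball (0:ℂ) r
      · rw [hh, indicator_of_mem hw, indicator_of_mem (by
          simpa [Metric.mem_ball, dist_eq] using hw)]
      · rw [hh, indicator_of_notMem hw, indicator_of_notMem (by
          intro hmem; apply hw; simpa [Metric.mem_ball, dist_eq] using hmem)]
    rw [funext e1, integral_add_left_eq_self _ z, integral_indicator measurableSet_ball]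
  -- step 2 : polar coordinates
  have step2 := Complex.integral_comp_polarCoord_symm h
  -- step 3 : rewrite the polar-side integrand as an indicator over a rectangle
  set S : Set (ℝ × ℝ) := Ioo (0:ℝ) r ×ˢ Ioo (-Real.pi) Real.pi with hS
  have step3 : (∫ p in polarCoord.target, p.1 • h (Complex.polarCoord.symm p))
      = ∫ p in S, p.1 • g (z + Complex.polarCoord.symm p) := by
    have e2 : EqOn (fun p : ℝ × ℝ => p.1 • h (Complex.polarCoord.symm p))
        (S.indicator (fun p : ℝ × ℝ => p.1 • g (z + Complex.polarCoord.symm p)))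
        polarCoord.target := by
      intro p hp
      rw [polarCoord_target] at hp
      have hp1 : 0 < p.1 := hp.1
      have habs : ‖Complex.polarCoord.symm p‖ = p.1 := by
        rw [Complex.norm_polarCoord_symm _, abs_of_pos hp1]
      by_cases hlt : p.1 < r
      · have hin : p ∈ S := ⟨⟨hp1, hlt⟩, hp.2⟩
        have hball : Complex.polarCoord.symm p ∈ Metric.ball (0:ℂ) r := by
          rw [mem_ball_zero_iff, habs]; exact hlt
        simp only [indicator_of_mem hin, hh, indicator_of_mem hball]
      · have hnin : p ∉ S := fun hmem => hlt hmem.1.2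
        have hball : Complex.polarCoord.symm p ∉ Metric.ball (0:ℂ) r := by
          rw [mem_ball_zero_iff, habs]; exact hlt
        simp only [indicator_of_notMem hnin, hh, indicator_of_notMem hball, smul_zero]
    rw [setIntegral_congr_fun polarCoord.open_target.measurableSet e2,
      setIntegral_indicator (by measurability)]
    congr 1
    rw [polarCoord_target,
      inter_eq_self_of_subset_right (Set.prod_mono Ioo_subset_Ioi_self subset_rfl)]
  -- integrability on the rectangle
  have hcont : ContinuousOn (fun p : ℝ × ℝ => p.1 • g (z + Complex.polarCoord.symm p))
      (Icc (0:ℝ) r ×ˢ Icc (-Real.pi) Real.pi) := by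
    have hmap : MapsTo (fun p : ℝ × ℝ => z + Complex.polarCoord.symm p)
        (Icc (0:ℝ) r ×ˢ Icc (-Real.pi) Real.pi) (Metric.closedBall z r) := by
      intro p hp
      rw [Metric.mem_closedBall, dist_eq]
      have : z + Complex.polarCoord.symm p - z = Complex.polarCoord.symm p := by ring
      rw [this, Complex.norm_polarCoord_symm, _root_.abs_of_nonneg hp.1.1]
      exact hp.1.2
    have hcsymm : Continuous (fun p : ℝ × ℝ => z + Complex.polarCoord.symm p) := by
      rw [funext fun p => congrArg (z + ·) (hsymm p)]
      fun_prop
    exact (continuous_fst.continuousOn (s := Icc (0:ℝ) r ×ˢ Icc (-Real.pi) Real.pi)).smul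
      (hc.comp hcsymm.continuousOn hmap)
  have hint : IntegrableOn (fun p : ℝ × ℝ => p.1 • g (z + Complex.polarCoord.symm p)) S volume := by
    apply (hcont.integrableOn_compact (isCompact_Icc.prod isCompact_Icc)).mono_set
    exact Set.prod_mono Ioo_subset_Icc_self Ioo_subset_Icc_self
  -- step 4 : Fubini and the circle mean value property
  have step4 : ∫ p in S, p.1 • g (z + Complex.polarCoord.symm p)
      = (Real.pi * r^2 : ℝ) • g z := by
    rw [hS, Measure.volume_eq_prod, setIntegral_prod _ (by rwa [← Measure.volume_eq_prod])]
    have inner : ∀ ρ ∈ Ioo (0:ℝ) r,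
        (∫ θ in Ioo (-Real.pi) Real.pi, (ρ, θ).1 • g (z + Complex.polarCoord.symm (ρ, θ)))
        = ρ • ((2*Real.pi : ℝ) • g z) := by
      intro ρ hρ
      have hcirc : ∀ θ : ℝ, z + Complex.polarCoord.symm (ρ, θ) = circleMap z ρ θ := by
        intro θ
        rw [hsymm (ρ, θ), circleMap, Complex.exp_mul_I]
        push_cast
        ring
      have per : Function.Periodic (fun θ => g (circleMap z ρ θ)) (2*Real.pi) :=
        (periodic_circleMap z ρ).comp g
      have hmv : ∫ θ in (0:ℝ)..(2*Real.pi), g (circleMap z ρ θ) = (2*Real.pi : ℝ) • g z := by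
        apply circle_mv hρ.1
        constructor
        · exact hd.mono (Metric.ball_subset_ball hρ.2.le)
        · exact hc.mono ((closure_ball_subset_closedBall).trans
            (Metric.closedBall_subset_closedBall hρ.2.le))
      calc (∫ θ in Ioo (-Real.pi) Real.pi, (ρ, θ).1 • g (z + Complex.polarCoord.symm (ρ, θ)))
          = ∫ θ in Ioo (-Real.pi) Real.pi, ρ • g (circleMap z ρ θ) := by
            simp only [hcirc]
        _ = ρ • ∫ θ in Ioo (-Real.pi) Real.pi, g (circleMap z ρ θ) := integral_smul ρ _
        _ = ρ • ∫ θ in (-Real.pi)..Real.pi, g (circleMap z ρ θ) := by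
            rw [intervalIntegral.integral_of_le (by linarith [Real.pi_pos]),
              integral_Ioc_eq_integral_Ioo]
        _ = ρ • ∫ θ in (0:ℝ)..(2*Real.pi), g (circleMap z ρ θ) := by
            have := per.intervalIntegral_add_eq (-Real.pi) 0
            rw [show -Real.pi + 2*Real.pi = Real.pi by ring, zero_add] at this
            rw [this]
        _ = ρ • ((2*Real.pi : ℝ) • g z) := by rw [hmv]
    rw [setIntegral_congr_fun measurableSet_Ioo inner, integral_smul_const]
    have : ∫ ρ in Ioo (0:ℝ) r, ρ = r^2/2 := by
      rw [← integral_Ioc_eq_integral_Ioo, ← intervalIntegral.integral_of_le hr.le,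
        integral_id]
      ring
    rw [this, smul_smul]
    norm_num
    left
    ring
  rw [← step1, ← step2, step3, step4]

/-- Sub-mean-value inequality for |f|² in lintegral form. -/
lemma sq_submean {f : ℂ → ℂ} {z : ℂ} {r : ℝ} (hr : 0 < r)
    (hd : DifferentiableOn ℂ f (Metric.ball z r))
    (hc : ContinuousOn f (Metric.closedBall z r)) :
    ENNReal.ofReal (Real.pi * r^2 * ‖f z‖^2)
      ≤ ∫⁻ w in Metric.ball z r, ENNReal.ofReal (‖f w‖^2) ∂volume := by
  set g : ℂ → ℂ := fun w => f w * f w with hg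
  have hmv : ∫ w in Metric.ball z r, g w = (Real.pi * r^2 : ℝ) • g z :=
    area_mv hr (hd.mul hd) (hc.mul hc)
  have h1 : ENNReal.ofReal (Real.pi * r^2 * ‖f z‖^2)
      = (‖∫ w in Metric.ball z r, g w‖₊ : ℝ≥0∞) := by
    rw [hmv, ← enorm_eq_nnnorm, ← ofReal_norm, norm_smul, hg]
    simp only [norm_mul, Real.norm_eq_abs]
    congr 1
    rw [_root_.abs_of_nonneg Real.pi_pos.le, _root_.abs_of_nonneg (sq_nonneg r), sq]
    ring
  rw [h1]
  calc (‖∫ w in Metric.ball z r, g w‖₊ : ℝ≥0∞)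
      ≤ ∫⁻ w in Metric.ball z r, (‖g w‖₊ : ℝ≥0∞) ∂volume :=
        enorm_integral_le_lintegral_enorm _
    _ = ∫⁻ w in Metric.ball z r, ENNReal.ofReal (‖f w‖^2) ∂volume := by
        apply lintegral_congr
        intro w
        rw [← enorm_eq_nnnorm, ← ofReal_norm, hg]
        simp [sq, map_mul]

/-- **Point evaluation bounds in 𝒫²(μ_𝔻).** For dμ_𝔻 = G(1-|z|)dA with G continuous,
increasing, tending to 0 at 0⁺ and satisfying (LogLogInt):
(a) the explicit bound |f(z)| ≤ 8 (1-|z|)⁻³ G((1-|z|)/2)^{-1/2} ‖f‖_{μ_𝔻};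
(b) there is a majorant F with |f(z)| ≤ exp(F(1-|z|)) ‖f‖_{μ_𝔻}. -/
theorem point_evaluation_bound
    (G : ℝ → ℝ)
    (hGcont : ContinuousOn G (Set.Ioc 0 1))
    (hGmono : MonotoneOn G (Set.Ioc 0 1))
    (hGpos : ∀ x ∈ Set.Ioc (0:ℝ) 1, 0 < G x)
    (hG0 : Tendsto G (𝓝[>] (0:ℝ)) (𝓝 0))
    (hLogLogInt : ∃ d > (0:ℝ),
      ∫⁻ x in Set.Ioc (0:ℝ) d, ENNReal.ofReal (Real.log (Real.log (1 / G x))) < ⊤) :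
    -- (a)
    (∀ f : ℂ → ℂ, DifferentiableOn ℂ f (Metric.ball 0 1) →
      ∀ z ∈ Metric.ball (0:ℂ) 1,
        ENNReal.ofReal (‖f z‖) ≤
          ENNReal.ofReal
            (8 / ((1 - ‖z‖) ^ 3 * Real.sqrt (G ((1 - ‖z‖) / 2)))) *
          (∫⁻ w, ENNReal.ofReal (‖f w‖ ^ 2 * G (1 - ‖w‖)) ∂mA)
            ^ ((1:ℝ)/2)) ∧
    -- (b)
    (∃ F : ℝ → ℝ,
      AntitoneOn F (Set.Ioo 0 1) ∧
      Tendsto F (𝓝[>] (0:ℝ)) atTop ∧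
      (∃ δ > (0:ℝ), ∫⁻ t in Set.Ioo (0:ℝ) δ, ENNReal.ofReal (Real.log (F t)) < ⊤) ∧
      ∀ f : ℂ → ℂ, DifferentiableOn ℂ f (Metric.ball 0 1) →
        ∀ z ∈ Metric.ball (0:ℂ) 1,
          ENNReal.ofReal (‖f z‖) ≤
            ENNReal.ofReal (Real.exp (F (1 - ‖z‖))) *
            (∫⁻ w, ENNReal.ofReal (‖f w‖ ^ 2 * G (1 - ‖w‖)) ∂mA)
              ^ ((1:ℝ)/2)) := by
  have parta : ∀ f : ℂ → ℂ, DifferentiableOn ℂ f (Metric.ball 0 1) →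
      ∀ z ∈ Metric.ball (0:ℂ) 1,
        ENNReal.ofReal (‖f z‖) ≤
          ENNReal.ofReal
            (8 / ((1 - ‖z‖) ^ 3 * Real.sqrt (G ((1 - ‖z‖) / 2)))) *
          (∫⁻ w, ENNReal.ofReal (‖f w‖ ^ 2 * G (1 - ‖w‖)) ∂mA)
            ^ ((1:ℝ)/2) := by
    intro f hf z hz
    rw [mem_ball_zero_iff] at hz
    have habsz : (0:ℝ) ≤ ‖z‖ := (norm_nonneg z)
    set r : ℝ := (1 - ‖z‖) / 2 with hrdef
    have hr : 0 < r := by simp only [hrdef]; linarith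
    have hr2 : r ≤ 1/2 := by simp only [hrdef]; linarith
    have hGr : 0 < G r := hGpos r ⟨hr, by linarith⟩
    have hsub : Metric.closedBall z r ⊆ Metric.ball (0:ℂ) 1 := by
      intro w hw
      rw [Metric.mem_closedBall, dist_eq] at hw
      rw [mem_ball_zero_iff]
      calc ‖w‖ ≤ ‖w - z‖ + ‖z‖ := by
            simpa using norm_add_le (w - z) z
        _ ≤ r + ‖z‖ := by linarith
        _ < 1 := by simp only [hrdef]; linarith
    have hballsub : Metric.ball z r ⊆ Metric.ball (0:ℂ) 1 :=
      Metric.ball_subset_closedBall.trans hsub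
    have hd : DifferentiableOn ℂ f (Metric.ball z r) := hf.mono hballsub
    have hcont : ContinuousOn f (Metric.closedBall z r) := hf.continuousOn.mono hsub
    -- the sub-mean value
    have hsm := sq_submean hr hd hcont
    -- pointwise comparison on ball z r
    have hpt : ∀ w ∈ Metric.ball z r,
        ENNReal.ofReal (G r) * ENNReal.ofReal (‖f w‖ ^ 2)
          ≤ ENNReal.ofReal (‖f w‖ ^ 2 * G (1 - ‖w‖)) := by
      intro w hw
      rw [Metric.mem_ball, dist_eq] at hw
      have habsw : ‖w‖ < ‖z‖ + r := by
        calc ‖w‖ ≤ ‖w - z‖ + ‖z‖ := by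
              simpa using norm_add_le (w - z) z
          _ < ‖z‖ + r := by linarith
      have h1w : r ≤ 1 - ‖w‖ := by simp only [hrdef] at habsw ⊢; linarith
      have h1w' : 1 - ‖w‖ ≤ 1 := by linarith [norm_nonneg w]
      have hGle : G r ≤ G (1 - ‖w‖) :=
        hGmono ⟨hr, by linarith⟩ ⟨lt_of_lt_of_le hr h1w, h1w'⟩ h1w
      rw [← ENNReal.ofReal_mul hGr.le]
      apply ENNReal.ofReal_le_ofReal
      calc G r * ‖f w‖ ^ 2 ≤ G (1 - ‖w‖) * ‖f w‖ ^ 2 :=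
            mul_le_mul_of_nonneg_right hGle (by positivity)
        _ = ‖f w‖ ^ 2 * G (1 - ‖w‖) := by ring
    -- main lower bound on the integral
    set J : ℝ≥0∞ := ∫⁻ w in Metric.ball (0:ℂ) 1,
        ENNReal.ofReal (‖f w‖ ^ 2 * G (1 - ‖w‖)) ∂volume with hJ
    have hJge : ENNReal.ofReal Real.pi * ENNReal.ofReal (G r * r^2 * ‖f z‖^2) ≤ J := by
      calc ENNReal.ofReal Real.pi * ENNReal.ofReal (G r * r^2 * ‖f z‖^2)
          = ENNReal.ofReal (G r) * ENNReal.ofReal (Real.pi * r^2 * ‖f z‖^2) := by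
            rw [← ENNReal.ofReal_mul Real.pi_pos.le, ← ENNReal.ofReal_mul hGr.le]
            congr 1
            ring
        _ ≤ ENNReal.ofReal (G r) *
              ∫⁻ w in Metric.ball z r, ENNReal.ofReal (‖f w‖ ^ 2) ∂volume :=
            mul_le_mul_right hsm _
        _ ≤ ∫⁻ w in Metric.ball z r,
              ENNReal.ofReal (G r) * ENNReal.ofReal (‖f w‖ ^ 2) ∂volume :=
            lintegral_const_mul_le _ _
        _ ≤ ∫⁻ w in Metric.ball z r,
              ENNReal.ofReal (‖f w‖ ^ 2 * G (1 - ‖w‖)) ∂volume := by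
            apply lintegral_mono_ae
            exact (ae_restrict_iff' measurableSet_ball).2 (ae_of_all _ hpt)
        _ ≤ J := lintegral_mono_set hballsub
    have hIeq : (∫⁻ w, ENNReal.ofReal (‖f w‖ ^ 2 * G (1 - ‖w‖)) ∂mA)
        = (ENNReal.ofReal Real.pi)⁻¹ * J := by
      rw [mA, lintegral_smul_measure, hJ, smul_eq_mul]
    have hpi0 : (ENNReal.ofReal Real.pi) ≠ 0 := by
      simp [ENNReal.ofReal_eq_zero, not_le, Real.pi_pos]
    have hIge : ENNReal.ofReal (G r * r^2 * ‖f z‖^2)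
        ≤ ∫⁻ w, ENNReal.ofReal (‖f w‖ ^ 2 * G (1 - ‖w‖)) ∂mA := by
      rw [hIeq]
      calc ENNReal.ofReal (G r * r^2 * ‖f z‖^2)
          = (ENNReal.ofReal Real.pi)⁻¹ *
            (ENNReal.ofReal Real.pi * ENNReal.ofReal (G r * r^2 * ‖f z‖^2)) := by
            rw [← mul_assoc, ENNReal.inv_mul_cancel hpi0 ENNReal.ofReal_ne_top, one_mul]
        _ ≤ (ENNReal.ofReal Real.pi)⁻¹ * J := mul_le_mul_right hJge _
    -- take square roots
    set s : ℝ := Real.sqrt (G r) * (r * ‖f z‖) with hs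
    have hs0 : 0 ≤ s := by positivity
    have hseq : G r * r^2 * ‖f z‖^2 = s^2 := by
      rw [hs, mul_pow, mul_pow, Real.sq_sqrt hGr.le]
      ring
    have hsqrt : ENNReal.ofReal s ≤
        (∫⁻ w, ENNReal.ofReal (‖f w‖ ^ 2 * G (1 - ‖w‖)) ∂mA) ^ ((1:ℝ)/2) := by
      calc ENNReal.ofReal s = (ENNReal.ofReal (s^2)) ^ ((1:ℝ)/2) := by
            rw [ENNReal.ofReal_rpow_of_nonneg (sq_nonneg s) (by norm_num),
              ← Real.sqrt_eq_rpow, Real.sqrt_sq hs0]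
        _ ≤ _ := by
            apply ENNReal.rpow_le_rpow _ (by norm_num)
            rw [← hseq]
            exact hIge
    -- final computation
    have hsqrtGr : 0 < Real.sqrt (G r) := Real.sqrt_pos.2 hGr
    have h2r : 1 - ‖z‖ = 2 * r := by simp only [hrdef]; ring
    have hkey : 8 / ((1 - ‖z‖) ^ 3 * Real.sqrt (G r)) * s
        = ‖f z‖ / r^2 := by
      rw [h2r, hs]
      field_simp
      ring
    calc ENNReal.ofReal (‖f z‖)
        ≤ ENNReal.ofReal (‖f z‖ / r^2) := by
          apply ENNReal.ofReal_le_ofReal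
          rw [le_div_iff₀ (by positivity)]
          have hr1 : r^2 ≤ 1 := by nlinarith
          simpa using mul_le_mul_of_nonneg_left hr1 (norm_nonneg (f z))
      _ = ENNReal.ofReal (8 / ((1 - ‖z‖) ^ 3 * Real.sqrt (G r)) * s) := by
          rw [hkey]
      _ = ENNReal.ofReal (8 / ((1 - ‖z‖) ^ 3 * Real.sqrt (G r))) *
            ENNReal.ofReal s := ENNReal.ofReal_mul (div_nonneg (by norm_num)
              (mul_nonneg (pow_nonneg (by linarith) 3) (Real.sqrt_nonneg _)))
      _ ≤ _ := mul_le_mul_right hsqrt _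
  refine ⟨parta, ?_⟩
  -- part (b)
  obtain ⟨d, hd0, hdInt⟩ := hLogLogInt
  have hev : ∀ᶠ x in 𝓝[>] (0:ℝ), G x < Real.exp (-1) :=
    hG0.eventually (gt_mem_nhds (by positivity))
  obtain ⟨ε, hε, hεsub⟩ := mem_nhdsGT_iff_exists_Ioo_subset.1 hev
  set F : ℝ → ℝ := fun t => Real.log (8 / (t^3 * Real.sqrt (G (t/2)))) with hF
  have hden : ∀ t ∈ Ioc (0:ℝ) 1, 0 < t^3 * Real.sqrt (G (t/2)) := by
    intro t ht
    have h2 : (0:ℝ) < G (t/2) := hGpos _ ⟨by linarith [ht.1], by linarith [ht.2]⟩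
    have := ht.1
    positivity
  refine ⟨F, ?_, ?_, ?_, ?_⟩
  · -- antitone
    intro s hs t ht hst
    have hDs := hden s ⟨hs.1, hs.2.le⟩
    have hDt := hden t ⟨ht.1, ht.2.le⟩
    have hmul : s^3 * Real.sqrt (G (s/2)) ≤ t^3 * Real.sqrt (G (t/2)) :=
      mul_le_mul (pow_le_pow_left₀ hs.1.le hst 3)
        (Real.sqrt_le_sqrt (hGmono ⟨by linarith [hs.1], by linarith [hs.2]⟩
          ⟨by linarith [ht.1], by linarith [ht.2]⟩ (by linarith)))
        (Real.sqrt_nonneg _) (pow_nonneg (hs.1.le.trans hst) 3)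
    exact Real.log_le_log (div_pos (by norm_num) hDt) (div_le_div_of_nonneg_left (by norm_num) hDs hmul)
  · -- tendsto atTop
    have hden0 : Tendsto (fun t => t^3 * Real.sqrt (G (t/2))) (𝓝[>] (0:ℝ)) (𝓝[>] 0) := by
      apply tendsto_nhdsWithin_of_tendsto_nhds_of_eventually_within
      · have h1 : Tendsto (fun t:ℝ => t^3) (𝓝[>] (0:ℝ)) (𝓝 0) := by
          simpa using ((continuous_pow 3).tendsto (0:ℝ)).mono_left nhdsWithin_le_nhds
        have hhalf : Tendsto (fun t:ℝ => t/2) (𝓝[>] (0:ℝ)) (𝓝[>] 0) := by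
          apply tendsto_nhdsWithin_of_tendsto_nhds_of_eventually_within
          · simpa using ((continuous_id.div_const (2:ℝ)).tendsto (0:ℝ)).mono_left
              nhdsWithin_le_nhds
          · filter_upwards [self_mem_nhdsWithin] with t ht
            exact half_pos (show (0:ℝ) < t from ht)
        have h2 : Tendsto (fun t:ℝ => Real.sqrt (G (t/2))) (𝓝[>] (0:ℝ)) (𝓝 0) := by
          have h3 : Tendsto Real.sqrt (𝓝 (0:ℝ)) (𝓝 0) := by
            simpa using Real.continuous_sqrt.tendsto (0:ℝ)
          exact h3.comp (hG0.comp hhalf)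
        simpa using h1.mul h2
      · filter_upwards [Ioo_mem_nhdsGT_of_mem
          (by norm_num : (0:ℝ) ∈ Ico (0:ℝ) 1)] with t ht
        exact hden t ⟨ht.1, ht.2.le⟩
    have h8 : Tendsto (fun t => 8 / (t^3 * Real.sqrt (G (t/2)))) (𝓝[>] (0:ℝ)) atTop := by
      simpa [div_eq_mul_inv] using
        (hden0.inv_tendsto_nhdsGT_zero).const_mul_atTop (by norm_num : (0:ℝ) < 8)
    exact Real.tendsto_log_atTop.comp h8
  · -- integrability of log F near 0
    set δ : ℝ := min (min d (Real.exp (-1))) ε with hδ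
    have hδ0 : 0 < δ := by
      apply lt_min (lt_min hd0 (Real.exp_pos _)) hε
    refine ⟨δ, hδ0, ?_⟩
    have hδd : δ ≤ d := le_trans (min_le_left _ _) (min_le_left _ _)
    have hδe : δ ≤ Real.exp (-1) := le_trans (min_le_left _ _) (min_le_right _ _)
    have hδε : δ ≤ ε := min_le_right _ _
    have he1 : Real.exp (-1) < 1 := by
      rw [Real.exp_lt_one_iff]; norm_num
    -- pointwise facts on Ioo 0 δ
    have hpt : ∀ t ∈ Ioo (0:ℝ) δ,
        ENNReal.ofReal (Real.log (F t)) ≤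
          ENNReal.ofReal (Real.log 11) + ENNReal.ofReal (2 * Real.sqrt (1/t)) +
          ENNReal.ofReal (Real.log (Real.log (1 / G (t/2)))) := by
      intro t ht
      obtain ⟨ht0, htδ⟩ := ht
      have hte : t < Real.exp (-1) := lt_of_lt_of_le htδ hδe
      have ht1 : t < 1 := lt_trans hte he1
      have hG2pos : 0 < G (t/2) := hGpos _ ⟨by linarith, by linarith⟩
      have hGsmall : G (t/2) < Real.exp (-1) := hεsub ⟨by linarith, by linarith⟩
      have hL1 : 1 ≤ Real.log (1/t) := by
        rw [Real.le_log_iff_exp_le (by positivity)]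
        rw [Real.exp_neg] at hte
        rw [le_one_div (Real.exp_pos 1) ht0]
        exact le_of_lt (by simpa using hte)
      have hL2 : 1 ≤ Real.log (1 / G (t/2)) := by
        rw [Real.le_log_iff_exp_le (by positivity)]
        rw [Real.exp_neg] at hGsmall
        rw [le_one_div (Real.exp_pos 1) hG2pos]
        exact le_of_lt (by simpa using hGsmall)
      have hform : F t = Real.log 8 + 3 * Real.log (1/t)
          + (1/2) * Real.log (1 / G (t/2)) := by
        simp only [hF]
        have hD := hden t ⟨ht0, ht1.le⟩
        rw [Real.log_div (by norm_num) (ne_of_gt hD),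
          Real.log_mul (by positivity) (by positivity),
          Real.log_pow, Real.log_sqrt hG2pos.le]
        simp only [one_div, Real.log_inv]
        push_cast
        ring
      have hFpos : 0 < F t := by
        have h8 : (0:ℝ) ≤ Real.log 8 := Real.log_nonneg (by norm_num)
        rw [hform]; linarith
      have hFle : F t ≤ 11 * (Real.log (1/t) * Real.log (1 / G (t/2))) := by
        have h8 : Real.log 8 ≤ 7 := by
          have := Real.log_le_sub_one_of_pos (by norm_num : (0:ℝ) < 8)
          linarith
        rw [hform]
        nlinarith [mul_nonneg (sub_nonneg.2 hL1) (sub_nonneg.2 hL2)]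
      have hlogF : Real.log (F t) ≤ Real.log 11 + Real.log (Real.log (1/t))
          + Real.log (Real.log (1 / G (t/2))) := by
        calc Real.log (F t) ≤ Real.log (11 * (Real.log (1/t) * Real.log (1 / G (t/2)))) :=
              Real.log_le_log hFpos hFle
          _ = Real.log 11 + (Real.log (Real.log (1/t))
              + Real.log (Real.log (1 / G (t/2)))) := by
              rw [Real.log_mul (by norm_num) (by positivity),
                Real.log_mul (by positivity) (by positivity)]
          _ = _ := by ring
      have hlogL1 : Real.log (Real.log (1/t)) ≤ 2 * Real.sqrt (1/t) := by
        have h1 : Real.log (Real.log (1/t)) ≤ Real.log (1/t) - 1 :=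
          Real.log_le_sub_one_of_pos (by linarith)
        have h2 : Real.log (1/t) = 2 * Real.log (Real.sqrt (1/t)) := by
          rw [Real.log_sqrt (by positivity)]; ring
        have h3 : Real.log (Real.sqrt (1/t)) ≤ Real.sqrt (1/t) - 1 :=
          Real.log_le_sub_one_of_pos (Real.sqrt_pos.2 (by positivity))
        linarith
      have hL2nn : 0 ≤ Real.log (Real.log (1 / G (t/2))) :=
        Real.log_nonneg hL2
      calc ENNReal.ofReal (Real.log (F t))
          ≤ ENNReal.ofReal (Real.log 11 + 2 * Real.sqrt (1/t)
              + Real.log (Real.log (1 / G (t/2)))) :=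
            ENNReal.ofReal_le_ofReal (by linarith)
        _ = _ := by
            rw [ENNReal.ofReal_add
                (add_nonneg (Real.log_nonneg (by norm_num)) (by positivity)) hL2nn,
              ENNReal.ofReal_add (Real.log_nonneg (by norm_num)) (by positivity)]
    -- split the integral
    have hmeas1 : Measurable (fun t:ℝ => Real.sqrt (1/t)) :=
      Real.continuous_sqrt.measurable.comp (measurable_const.div measurable_id)
    have hmeas2 : Measurable (fun t:ℝ => ENNReal.ofReal (2 * Real.sqrt (1/t))) :=
      (measurable_const.mul hmeas1).ennreal_ofReal
    have hsplit : ∫⁻ t in Ioo (0:ℝ) δ, ENNReal.ofReal (Real.log (F t))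
        ≤ (ENNReal.ofReal (Real.log 11) * volume (Ioo (0:ℝ) δ))
          + (∫⁻ t in Ioo (0:ℝ) δ, ENNReal.ofReal (2 * Real.sqrt (1/t)))
          + (∫⁻ t in Ioo (0:ℝ) δ, ENNReal.ofReal (Real.log (Real.log (1 / G (t/2))))) := by
      calc ∫⁻ t in Ioo (0:ℝ) δ, ENNReal.ofReal (Real.log (F t))
          ≤ ∫⁻ t in Ioo (0:ℝ) δ,
              (ENNReal.ofReal (Real.log 11) + ENNReal.ofReal (2 * Real.sqrt (1/t)) +
               ENNReal.ofReal (Real.log (Real.log (1 / G (t/2))))) := by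
            apply lintegral_mono_ae
            exact (ae_restrict_iff' measurableSet_Ioo).2 (ae_of_all _ hpt)
        _ = (∫⁻ t in Ioo (0:ℝ) δ,
              (ENNReal.ofReal (Real.log 11) + ENNReal.ofReal (2 * Real.sqrt (1/t))))
            + ∫⁻ t in Ioo (0:ℝ) δ, ENNReal.ofReal (Real.log (Real.log (1 / G (t/2)))) :=
            lintegral_add_left (measurable_const.add hmeas2) _
        _ = _ := by
            rw [lintegral_add_left measurable_const, setLIntegral_const]
    -- each piece is finite
    have hT1 : ENNReal.ofReal (Real.log 11) * volume (Ioo (0:ℝ) δ) < ⊤ :=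
      ENNReal.mul_lt_top ENNReal.ofReal_lt_top (by simp [Real.volume_Ioo])
    have hT2 : (∫⁻ t in Ioo (0:ℝ) δ, ENNReal.ofReal (2 * Real.sqrt (1/t))) < ⊤ := by
      have hint : IntegrableOn (fun t:ℝ => 2 * Real.sqrt (1/t)) (Ioo (0:ℝ) δ) := by
        have hbase : IntegrableOn (fun x:ℝ => x ^ (-(1/2) : ℝ)) (Ioo (0:ℝ) δ) :=
          (intervalIntegral.integrableOn_Ioo_rpow_iff hδ0).2 (by norm_num)
        have hbase2 : IntegrableOn (fun x:ℝ => 2 * x ^ (-(1/2) : ℝ)) (Ioo (0:ℝ) δ) :=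
          hbase.const_mul 2
        apply hbase2.congr_fun _ measurableSet_Ioo
        intro t ht
        show 2 * t ^ (-(1/2) : ℝ) = 2 * Real.sqrt (1/t)
        have hsr : Real.sqrt (1/t) = t ^ (-(1/2) : ℝ) := by
          rw [show (1:ℝ)/t = t⁻¹ from one_div t, Real.sqrt_eq_rpow,
            ← Real.rpow_neg_one t, ← Real.rpow_mul ht.1.le]
          norm_num
        rw [hsr]
      exact hint.setLIntegral_lt_top
    have hT3 : (∫⁻ t in Ioo (0:ℝ) δ,
        ENNReal.ofReal (Real.log (Real.log (1 / G (t/2))))) < ⊤ := by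
      set φ : ℝ → ℝ≥0∞ := fun x => ENNReal.ofReal (Real.log (Real.log (1 / G x))) with hφ
      set ψ : ℝ → ℝ≥0∞ := (Ioo (0:ℝ) (δ/2)).indicator φ with hψ
      have hδ2 : δ/2 ≤ 1 := by
        have : δ ≤ 1 := le_trans hδe he1.le
        linarith
      have hψae : AEMeasurable ψ volume := by
        rw [hψ, aemeasurable_indicator_iff measurableSet_Ioo]
        have hGae : AEMeasurable G (volume.restrict (Ioo (0:ℝ) (δ/2))) :=
          (hGcont.mono (fun x hx => ⟨hx.1, by linarith [hx.2]⟩)).aemeasurable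
            measurableSet_Ioo
        have hinv : Measurable (fun y:ℝ => 1/y) :=
          measurable_const.div measurable_id
        have hm : Measurable (fun y:ℝ => ENNReal.ofReal (Real.log (Real.log (1/y)))) :=
          (Real.measurable_log.comp (Real.measurable_log.comp hinv)).ennreal_ofReal
        exact hm.comp_aemeasurable hGae
      have hkey : ∫⁻ t in Ioo (0:ℝ) δ, φ (t/2) = ENNReal.ofReal 2 * ∫⁻ x, ψ x := by
        have e1 : ∀ t:ℝ, (Ioo (0:ℝ) δ).indicator (fun t => φ (t/2)) t = ψ ((2:ℝ)⁻¹ * t) := by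
          intro t
          rw [hψ]
          by_cases htm : t ∈ Ioo (0:ℝ) δ
          · rw [indicator_of_mem htm, indicator_of_mem (by
              constructor
              · simpa using half_pos htm.1
              · rw [inv_mul_eq_div]
                exact div_lt_div_of_pos_right htm.2 (by norm_num)  -- may fail
              )]
            rw [inv_mul_eq_div]
          · rw [indicator_of_notMem htm, indicator_of_notMem (by
              intro hmem
              apply htm
              rw [inv_mul_eq_div] at hmem
              exact ⟨by linarith [hmem.1], by linarith [hmem.2]⟩)]
        rw [← lintegral_indicator measurableSet_Ioo, funext e1]
        have hmap : Measure.map (fun t:ℝ => (2:ℝ)⁻¹ * t) volume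
            = ENNReal.ofReal 2 • volume := by
          rw [Real.map_volume_mul_left (by norm_num : ((2:ℝ)⁻¹) ≠ 0)]
          norm_num
        have hψae' : AEMeasurable ψ (Measure.map (fun t:ℝ => (2:ℝ)⁻¹ * t) volume) := by
          rw [hmap]
          exact (aemeasurable_smul_measure_iff (by simp)).2 hψae
        rw [← lintegral_map' hψae' (aemeasurable_id.const_mul _), hmap,
          lintegral_smul_measure, smul_eq_mul]
      rw [show (fun t:ℝ => ENNReal.ofReal (Real.log (Real.log (1 / G (t/2)))))
          = fun t:ℝ => φ (t/2) from rfl, hkey]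
      apply ENNReal.mul_lt_top ENNReal.ofReal_lt_top
      rw [hψ, lintegral_indicator measurableSet_Ioo]
      calc ∫⁻ x in Ioo (0:ℝ) (δ/2), φ x ≤ ∫⁻ x in Ioc (0:ℝ) d, φ x := by
            apply lintegral_mono_set
            intro x hx
            exact ⟨hx.1, by linarith [hx.2, hδd]⟩
        _ < ⊤ := hdInt
    exact lt_of_le_of_lt hsplit
      (ENNReal.add_lt_top.2 ⟨ENNReal.add_lt_top.2 ⟨hT1, hT2⟩, hT3⟩)
  · -- the bound
    intro f hf z hz
    have hz' : ‖z‖ < 1 := by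
      rw [mem_ball_zero_iff] at hz
      exact hz
    have ht0 : 0 < 1 - ‖z‖ := by linarith
    have ht1 : 1 - ‖z‖ ≤ 1 := by linarith [norm_nonneg z]
    have hexp : Real.exp (F (1 - ‖z‖))
        = 8 / ((1 - ‖z‖) ^ 3 * Real.sqrt (G ((1 - ‖z‖) / 2))) := by
      simp only [hF]
      exact Real.exp_log (div_pos (by norm_num) (hden _ ⟨ht0, ht1⟩))
    rw [hexp]
    exact parta f hf z hz
end
end

section
/- Let H be a complex vector space of analytic functions on 𝔻 (under pointwise operations) equipped with a norm making it a Banach space. Assume that H contains every bounded analytic function on 𝔻, and that for every bounded analytic function h on 𝔻 the multiplication map M_h : f ↦ h·f maps H into H and is a bounded linear operator on H. Call a bounded analytic function u on 𝔻 cyclic if there is a sequence of analytic polynomials (p_n) with ‖1 − p_n·u‖_H → 0. Then the product u·v of any two cyclic bounded analytic functions u and v is cyclic. -/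
open Metric
open scoped Topology

noncomputable section

/-- A bounded analytic function on the unit disk. -/
def BoundedAnalytic (u : ℂ → ℂ) : Prop :=
  DifferentiableOn ℂ u (Metric.ball 0 1) ∧ ∃ C, ∀ z ∈ Metric.ball (0:ℂ) 1, ‖u z‖ ≤ C

/-- Cyclicity of a bounded analytic function u in the Banach space H of analytic
functions on 𝔻 (presented via the realization map ι): the constant function 1
can be approximated in H by elements representing polynomial multiples of u. -/
def CyclicIn (H : Type*) [NormedAddCommGroup H] [NormedSpace ℂ H]
    (ι : H →ₗ[ℂ] (ℂ → ℂ)) (u : ℂ → ℂ) : Prop :=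
  ∀ oneH : H, (∀ z ∈ Metric.ball (0:ℂ) 1, ι oneH z = 1) →
    ∀ ε > (0:ℝ), ∃ (p : Polynomial ℂ) (g : H),
      (∀ z ∈ Metric.ball (0:ℂ) 1, ι g z = p.eval z * u z) ∧ ‖oneH - g‖ < ε

lemma boundedAnalytic_poly_mul (p : Polynomial ℂ) (u : ℂ → ℂ) (hu : BoundedAnalytic u) :
    BoundedAnalytic (fun z => p.eval z * u z) := by
  obtain ⟨hud, C, hC⟩ := hu
  obtain ⟨B, hB⟩ := (isCompact_closedBall (0:ℂ) 1).exists_bound_of_continuousOn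
    p.continuous.continuousOn
  have hB0 : 0 ≤ B := le_trans (norm_nonneg _) (hB 0 (by simp))
  have hC0 : 0 ≤ C := le_trans (norm_nonneg _) (hC 0 (by simp))
  refine ⟨((p.differentiable).differentiableOn).mul hud, B * C, fun z hz => ?_⟩
  rw [norm_mul]
  exact mul_le_mul (hB z (ball_subset_closedBall hz)) (hC z hz) (norm_nonneg _) hB0

/-- **Products of cyclic functions are cyclic.** Let H be a Banach space of analytic
functions on 𝔻 containing all bounded analytic functions, on which every bounded
analytic function acts as a bounded multiplication operator. Then the product of
two cyclic bounded analytic functions is cyclic. -/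
theorem product_of_cyclic_is_cyclic
    (H : Type*) [NormedAddCommGroup H] [NormedSpace ℂ H] [CompleteSpace H]
    (ι : H →ₗ[ℂ] (ℂ → ℂ))
    -- elements of H are (determined by) analytic functions on 𝔻
    (hinj : ∀ f g : H, (∀ z ∈ Metric.ball (0:ℂ) 1, ι f z = ι g z) → f = g)
    (hana : ∀ f : H, DifferentiableOn ℂ (ι f) (Metric.ball 0 1))
    -- H contains every bounded analytic function
    (hcontains : ∀ h : ℂ → ℂ, BoundedAnalytic h →
      ∃ fh : H, ∀ z ∈ Metric.ball (0:ℂ) 1, ι fh z = h z)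
    -- every bounded analytic function defines a bounded multiplication operator on H
    (hmult : ∀ h : ℂ → ℂ, BoundedAnalytic h →
      ∃ T : H →L[ℂ] H, ∀ f : H, ∀ z ∈ Metric.ball (0:ℂ) 1, ι (T f) z = h z * ι f z)
    (u v : ℂ → ℂ) (hu : BoundedAnalytic u) (hv : BoundedAnalytic v)
    (hucyc : CyclicIn H ι u) (hvcyc : CyclicIn H ι v) :
    CyclicIn H ι (fun z => u z * v z) := by
  intro oneH hone ε hε
  obtain ⟨p, gp, hgp, hgpn⟩ := hucyc oneH hone (ε / 2) (by positivity)
  have hpu : BoundedAnalytic (fun z => p.eval z * u z) := boundedAnalytic_poly_mul p u hu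
  obtain ⟨T, hT⟩ := hmult _ hpu
  obtain ⟨q, gq, hgq, hgqn⟩ := hvcyc oneH hone (ε / (2 * (‖T‖ + 1))) (by positivity)
  refine ⟨p * q, T gq, ?_, ?_⟩
  · intro z hz
    rw [hT gq z hz, hgq z hz, Polynomial.eval_mul]
    ring
  · have hTone : T oneH = gp := by
      apply hinj
      intro z hz
      rw [hT oneH z hz, hone z hz, hgp z hz, mul_one]
    have hsplit : oneH - T gq = (oneH - gp) + T (oneH - gq) := by
      rw [map_sub, hTone]; abel
    have hTpos : (0:ℝ) < ‖T‖ + 1 := by positivity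
    have h2 : ‖T‖ * ‖oneH - gq‖ < ε / 2 := by
      calc ‖T‖ * ‖oneH - gq‖ ≤ (‖T‖ + 1) * ‖oneH - gq‖ :=
            mul_le_mul_of_nonneg_right (by linarith) (norm_nonneg _)
        _ < (‖T‖ + 1) * (ε / (2 * (‖T‖ + 1))) := mul_lt_mul_of_pos_left hgqn hTpos
        _ = ε / 2 := by field_simp
    calc ‖oneH - T gq‖ = ‖(oneH - gp) + T (oneH - gq)‖ := by rw [hsplit]
      _ ≤ ‖oneH - gp‖ + ‖T (oneH - gq)‖ := norm_add_le _ _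
      _ ≤ ‖oneH - gp‖ + ‖T‖ * ‖oneH - gq‖ := by gcongr; exact T.le_opNorm _
      _ < ε / 2 + ε / 2 := add_lt_add hgpn h2
      _ = ε := by ring
end
end

section
/- Let m : (0,∞) → (0,∞) be positive, continuous and decreasing with lim_{x→0⁺} m(x) = +∞, and let m_*(x) = inf_{y>0} (m(y) + x·y) be its lower Legendre envelope. Then the following are equivalent: (i) there exists δ > 0 such that ∫₀^δ log m(x) dx < ∞; (ii) ∫₁^∞ m_*(x)/(1+x²) dx < ∞. -/
open MeasureTheory Set Filter
open scoped Real ENNReal Topology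

noncomputable section

/-- Lower Legendre envelope m_*(x) = inf_{y>0} (m(y) + x y). -/
def lowerLegendre (m : ℝ → ℝ) (x : ℝ) : ℝ :=
  sInf ((fun y => m y + x * y) '' Set.Ioi 0)

lemma lowerset_in_Ioi_measurable (S : Set ℝ) (hS : S ⊆ Set.Ioi 0)
    (hlow : ∀ t ∈ S, ∀ u : ℝ, 0 < u → u ≤ t → u ∈ S) : MeasurableSet S := by
  rcases S.eq_empty_or_nonempty with h | hne
  · simp [h]
  by_cases hbd : BddAbove S
  · set b := sSup S with hb
    have h1 : Set.Ioo 0 b ⊆ S := by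
      intro t ht
      obtain ⟨u, hu, htu⟩ := exists_lt_of_lt_csSup hne ht.2
      exact hlow u hu t ht.1 htu.le
    have h2 : S ⊆ Set.Ioc 0 b := fun t ht => ⟨hS ht, le_csSup hbd ht⟩
    by_cases hbS : b ∈ S
    · have : S = Set.Ioc 0 b := by
        apply subset_antisymm h2
        intro t ht
        rcases eq_or_lt_of_le ht.2 with rfl | hlt
        · exact hbS
        · exact h1 ⟨ht.1, hlt⟩
      rw [this]; exact measurableSet_Ioc
    · have : S = Set.Ioo 0 b := by
        apply subset_antisymm _ h1
        intro t ht
        refine ⟨hS ht, lt_of_le_of_ne (h2 ht).2 ?_⟩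
        rintro rfl; exact hbS ht
      rw [this]; exact measurableSet_Ioo
  · have : S = Set.Ioi 0 := by
      apply subset_antisymm hS
      intro t ht
      obtain ⟨u, hu, htu⟩ := not_bddAbove_iff.mp hbd t
      exact hlow u hu t ht htu.le
    rw [this]; exact measurableSet_Ioi

lemma lintegral_one_div_Ioo {c : ℝ} (hc : 0 < c) :
    ∫⁻ x in Set.Ioo 1 c, ENNReal.ofReal (1/x) = ENNReal.ofReal (Real.log c) := by
  rcases le_or_gt c 1 with h | h
  · rw [Set.Ioo_eq_empty (by linarith)]
    simp [Real.log_nonpos (le_of_lt hc) h, ENNReal.ofReal_of_nonpos,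
      Real.log_nonpos hc.le h]
  · have hInt : IntegrableOn (fun x : ℝ => 1/x) (Set.Ioo 1 c) := by
      have : IntegrableOn (fun x : ℝ => 1/x) (Set.Icc 1 c) := by
        apply ContinuousOn.integrableOn_Icc
        apply ContinuousOn.div continuousOn_const continuousOn_id
        intro x hx; exact ne_of_gt (lt_of_lt_of_le one_pos hx.1)
      exact this.mono_set Set.Ioo_subset_Icc_self
    have hnn : 0 ≤ᵐ[volume.restrict (Set.Ioo 1 c)] fun x : ℝ => 1/x := by
      refine ae_restrict_of_forall_mem measurableSet_Ioo fun x hx => ?_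
      have : (0:ℝ) < x := lt_trans one_pos hx.1
      positivity
    rw [← MeasureTheory.ofReal_integral_eq_lintegral_ofReal hInt hnn]
    congr 1
    rw [← MeasureTheory.integral_Ioc_eq_integral_Ioo,
      ← intervalIntegral.integral_of_le h.le,
      integral_one_div (by
        rw [Set.uIcc_of_le h.le]
        intro hmem
        linarith [hmem.1]), div_one]

lemma lintegral_neglog_finite :
    ∫⁻ t in Set.Ioc (0:ℝ) 1, ENNReal.ofReal (-Real.log t) < ⊤ := by
  have hInt : IntegrableOn (fun x : ℝ => 2 * x ^ (-(1/2) : ℝ)) (Set.Ioc 0 1) := by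
    have := (intervalIntegral.intervalIntegrable_rpow' (r := -(1/2)) (a := 0) (b := 1)
      (by norm_num)).1
    simpa [IntegrableOn] using (this.const_mul 2)
  have hb : ∀ t ∈ Set.Ioc (0:ℝ) 1, ENNReal.ofReal (-Real.log t)
      ≤ ENNReal.ofReal (2 * t ^ (-(1/2) : ℝ)) := by
    intro t ht
    apply ENNReal.ofReal_le_ofReal
    have ht0 : (0:ℝ) < t := ht.1
    have hsq : Real.sqrt (1/t) > 0 := Real.sqrt_pos.mpr (by positivity)
    have h1 : -Real.log t = Real.log (1/t) := by
      rw [Real.log_div one_ne_zero (ne_of_gt ht0), Real.log_one]; ring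
    have h2 : Real.log (1/t) = 2 * Real.log (Real.sqrt (1/t)) := by
      rw [Real.log_sqrt (by positivity)]; ring
    have h3 : Real.log (Real.sqrt (1/t)) ≤ Real.sqrt (1/t) - 1 :=
      Real.log_le_sub_one_of_pos hsq
    have h4 : Real.sqrt (1/t) = t ^ (-(1/2) : ℝ) := by
      rw [one_div, Real.sqrt_eq_rpow, ← Real.rpow_neg_one, ← Real.rpow_mul ht0.le]
      norm_num
    nlinarith [h3, h4, Real.sqrt_nonneg (1/t)]
  calc ∫⁻ t in Set.Ioc (0:ℝ) 1, ENNReal.ofReal (-Real.log t)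
      ≤ ∫⁻ t in Set.Ioc (0:ℝ) 1, ENNReal.ofReal (2 * t ^ (-(1/2) : ℝ)) :=
        lintegral_mono_ae (ae_restrict_of_forall_mem measurableSet_Ioc hb)
    _ ≤ ∫⁻ t in Set.Ioc (0:ℝ) 1, ‖(2 * t ^ (-(1/2) : ℝ))‖ₑ :=
        lintegral_ofReal_le_lintegral_enorm _
    _ < ⊤ := hInt.2

/-- **Beurling's lemma.** For a positive continuous decreasing m on (0,∞) with
m(x) → +∞ as x → 0⁺: ∫₀^δ log m < ∞ for some δ > 0 iff ∫₁^∞ m_*(x)/(1+x²) dx < ∞. -/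
theorem log_integrability_iff_legendre_integrability
    (m : ℝ → ℝ)
    (hmpos : ∀ x > (0:ℝ), 0 < m x)
    (hmcont : ContinuousOn m (Set.Ioi 0))
    (hmdec : AntitoneOn m (Set.Ioi 0))
    (hmlim : Tendsto m (𝓝[>] (0:ℝ)) atTop) :
    (∃ δ > (0:ℝ), ∫⁻ x in Set.Ioc (0:ℝ) δ, ENNReal.ofReal (Real.log (m x)) < ⊤) ↔
      ∫⁻ x in Set.Ioi (1:ℝ), ENNReal.ofReal (lowerLegendre m x / (1 + x ^ 2)) < ⊤ := by
  classical
  -- measurable extension of m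
  set M : ℝ → ℝ := fun t => if 0 < t then m t else 0 with hMdef
  have hMeq : ∀ t, 0 < t → M t = m t := fun t ht => if_pos ht
  have hM : Measurable M := by
    apply measurable_of_Ioi
    intro c
    have hset : M ⁻¹' Set.Ioi c =
        {t : ℝ | 0 < t ∧ c < m t} ∪ (if c < 0 then Set.Iic 0 else ∅) := by
      ext t
      by_cases ht : 0 < t <;> by_cases hc : c < 0 <;>
        simp [hMdef, ht, hc, not_lt.mp, le_of_not_gt]
    rw [hset]
    apply MeasurableSet.union
    · apply lowerset_in_Ioi_measurable _ (fun t ht => ht.1)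
      intro t ht u hu hut
      exact ⟨hu, lt_of_lt_of_le ht.2 (hmdec (Set.mem_Ioi.mpr hu) (Set.mem_Ioi.mpr ht.1) hut)⟩
    · split <;> simp
  -- φ strictly antitone
  have hphi_anti : ∀ s1 : ℝ, 0 < s1 → ∀ s2 : ℝ, 0 < s2 → s1 < s2 →
      m s2 / s2 < m s1 / s1 := by
    intro s1 hs1 s2 hs2 h12
    have hm12 : m s2 ≤ m s1 := hmdec (Set.mem_Ioi.mpr hs1) (Set.mem_Ioi.mpr hs2) h12.le
    calc m s2 / s2 ≤ m s1 / s2 := by gcongr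
      _ < m s1 / s1 := div_lt_div_of_pos_left (hmpos s1 hs1) hs1 h12
  -- balance point existence
  have hbal : ∀ x : ℝ, 0 < x → ∃ s, 0 < s ∧ m s = x * s := by
    intro x hx
    have h1 : ∀ᶠ a in 𝓝[>] (0:ℝ), x < m a := hmlim.eventually (eventually_gt_atTop x)
    have h2 : ∀ᶠ a in 𝓝[>] (0:ℝ), a ∈ Set.Ioo (0:ℝ) 1 :=
      Ioo_mem_nhdsGT_of_mem (by constructor <;> norm_num)
    obtain ⟨a, ha1, ha2⟩ := (h1.and h2).exists
    obtain ⟨b, hb1, hbx⟩ : ∃ b : ℝ, 1 ≤ b ∧ m 1 / x < b :=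
      ⟨max 1 (m 1 / x) + 1, by simp [le_max_left],
        by have := le_max_right 1 (m 1 / x); linarith⟩
    have hab : a < b := lt_of_lt_of_le ha2.2 hb1
    have hgb : m b - x * b < 0 := by
      have hbpos : (0:ℝ) < b := by linarith
      have hmb : m b ≤ m 1 := hmdec (Set.mem_Ioi.mpr one_pos) (Set.mem_Ioi.mpr hbpos) hb1
      have h4 : m 1 < x * b := by
        have h3 := hbx
        rw [div_lt_iff₀ hx] at h3; linarith [h3]
      linarith
    have hga : 0 < m a - x * a := by
      have : x * a < x * 1 := by
        apply mul_lt_mul_of_pos_left ha2.2 hx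
      nlinarith [ha1]
    have hcont : ContinuousOn (fun s => m s - x * s) (Set.Icc a b) := by
      apply ContinuousOn.sub
      · exact hmcont.mono (fun s hs => lt_of_lt_of_le ha2.1 hs.1)
      · exact (continuous_const.mul continuous_id).continuousOn
    have hmem : (0:ℝ) ∈ Set.Icc ((fun s => m s - x * s) b) ((fun s => m s - x * s) a) :=
      ⟨hgb.le, hga.le⟩
    obtain ⟨s, hs, hgs⟩ := intermediate_value_Icc' hab.le hcont hmem
    exact ⟨s, lt_of_lt_of_le ha2.1 hs.1, by simp at hgs; linarith⟩
  -- the balance function σ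
  have hmax_pos : ∀ x : ℝ, (0:ℝ) < max x 1 := fun x => lt_of_lt_of_le one_pos (le_max_right x 1)
  set σ : ℝ → ℝ := fun x => (hbal (max x 1) (hmax_pos x)).choose with hσdef
  have hσpos : ∀ x, 0 < σ x := fun x => (hbal (max x 1) (hmax_pos x)).choose_spec.1
  have hσeq : ∀ x, m (σ x) = max x 1 * σ x := fun x => (hbal (max x 1) (hmax_pos x)).choose_spec.2
  have hσanti : Antitone σ := by
    intro x1 x2 h12
    by_contra hcon
    push_neg at hcon
    have hlt := hphi_anti (σ x1) (hσpos x1) (σ x2) (hσpos x2) hcon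
    rw [hσeq, hσeq, mul_div_assoc, mul_div_assoc,
      div_self (ne_of_gt (hσpos x1)), div_self (ne_of_gt (hσpos x2)),
      mul_one, mul_one] at hlt
    exact absurd (max_le_max h12 le_rfl) (not_le.mpr hlt)
  -- envelope bounds
  have hub : ∀ x : ℝ, 0 ≤ x → ∀ s : ℝ, 0 < s → lowerLegendre m x ≤ m s + x * s := by
    intro x hx s hs
    apply csInf_le
    · refine ⟨0, ?_⟩
      rintro v ⟨y, hy, rfl⟩
      have h1 := hmpos y hy
      have h2 : 0 ≤ x * y := mul_nonneg hx (le_of_lt hy)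
      show (0:ℝ) ≤ m y + x * y
      linarith
    · exact ⟨s, hs, rfl⟩
  have hlb : ∀ x : ℝ, 0 < x → ∀ s : ℝ, 0 < s → m s ≤ x * s → m s ≤ lowerLegendre m x := by
    intro x hx s hs hms
    apply le_csInf (Set.Nonempty.image _ Set.nonempty_Ioi)
    rintro v ⟨y, hy, rfl⟩
    show m s ≤ m y + x * y
    rcases le_total y s with h | h
    · have h1 : m s ≤ m y := hmdec (Set.mem_Ioi.mpr hy) (Set.mem_Ioi.mpr hs) h
      have h2 : 0 ≤ x * y := mul_nonneg hx.le hy.le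
      linarith
    · have h1 : x * s ≤ x * y := mul_le_mul_of_nonneg_left h hx.le
      have h2 := hmpos y hy
      linarith
  have hsand : ∀ x : ℝ, 1 < x →
      x * σ x ≤ lowerLegendre m x ∧ lowerLegendre m x ≤ 2 * (x * σ x) := by
    intro x hx
    have hx0 : (0:ℝ) < x := by linarith
    have heq : m (σ x) = x * σ x := by rw [hσeq, max_eq_left hx.le]
    constructor
    · rw [← heq]; exact hlb x hx0 (σ x) (hσpos x) (le_of_eq heq)
    · have := hub x hx0.le (σ x) (hσpos x)
      rw [heq] at this; linarith
  -- sigma at balance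
  have hσx : ∀ x : ℝ, 1 < x → m (σ x) / σ x = x := by
    intro x hx
    rw [hσeq, max_eq_left hx.le, mul_div_assoc, div_self (ne_of_gt (hσpos x)), mul_one]
  have hkey : ∀ x : ℝ, 1 < x → ∀ t : ℝ, 0 < t → (x < m t / t ↔ t < σ x) := by
    intro x hx t ht
    constructor
    · intro h
      by_contra hcon
      push_neg at hcon
      rcases eq_or_lt_of_le hcon with heq | hlt
      · rw [← heq, hσx x hx] at h; exact lt_irrefl x h
      · have := hphi_anti (σ x) (hσpos x) t ht hlt
        rw [hσx x hx] at this; linarith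
    · intro h
      have := hphi_anti t ht (σ x) (hσpos x) h
      rw [hσx x hx] at this; linarith
  -- the double integral function
  set F : ℝ × ℝ → ℝ≥0∞ := fun p =>
    ENNReal.ofReal (1/p.1) * Set.indicator {q : ℝ × ℝ | q.1 < M q.2 / q.2} 1 p with hFdef
  have hFmeas : Measurable F := by
    apply Measurable.mul
    · exact ENNReal.measurable_ofReal.comp (measurable_const.div measurable_fst)
    · exact measurable_one.indicator
        (measurableSet_lt measurable_fst ((hM.comp measurable_snd).div measurable_snd))
  have hinner1 : ∀ x : ℝ, 1 < x →
      (∫⁻ t in Set.Ioi (0:ℝ), F (x, t)) = ENNReal.ofReal (σ x / x) := by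
    intro x hx
    have hpt : ∀ t ∈ Set.Ioi (0:ℝ),
        F (x, t) = Set.indicator (Set.Ioo 0 (σ x)) (fun _ => ENNReal.ofReal (1/x)) t := by
      intro t ht
      have ht0 : (0:ℝ) < t := ht
      simp only [hFdef]
      by_cases hmem : t < σ x
      · have h1 : ((x:ℝ), t) ∈ {q : ℝ × ℝ | q.1 < M q.2 / q.2} := by
          show x < M t / t
          rw [hMeq t ht0]; exact (hkey x hx t ht0).mpr hmem
        rw [Set.indicator_of_mem h1, Set.indicator_of_mem (Set.mem_Ioo.mpr ⟨ht0, hmem⟩), Pi.one_apply, mul_one]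
      · have h1 : ((x:ℝ), t) ∉ {q : ℝ × ℝ | q.1 < M q.2 / q.2} := by
          show ¬(x < M t / t)
          rw [hMeq t ht0]
          exact fun hc => hmem ((hkey x hx t ht0).mp hc)
        have h2 : t ∉ Set.Ioo 0 (σ x) := fun hc => hmem hc.2
        rw [Set.indicator_of_notMem h1, Set.indicator_of_notMem h2, mul_zero]
    calc (∫⁻ t in Set.Ioi (0:ℝ), F (x, t))
        = ∫⁻ t in Set.Ioi (0:ℝ),
            Set.indicator (Set.Ioo 0 (σ x)) (fun _ => ENNReal.ofReal (1/x)) t :=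
          setLIntegral_congr_fun measurableSet_Ioi hpt
      _ = ∫⁻ t in Set.Ioo 0 (σ x), ENNReal.ofReal (1/x) ∂(volume.restrict (Set.Ioi 0)) :=
          lintegral_indicator measurableSet_Ioo _
      _ = ENNReal.ofReal (1/x) * (volume.restrict (Set.Ioi 0)) (Set.Ioo 0 (σ x)) :=
          setLIntegral_const _ _
      _ = ENNReal.ofReal (σ x / x) := by
          rw [Measure.restrict_apply measurableSet_Ioo,
            Set.inter_eq_left.mpr (fun t ht => ht.1), Real.volume_Ioo, sub_zero,
            ← ENNReal.ofReal_mul (by positivity : (0:ℝ) ≤ 1/x), one_div_mul_eq_div]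
  have hinner2 : ∀ t : ℝ, 0 < t →
      (∫⁻ x in Set.Ioi (1:ℝ), F (x, t)) = ENNReal.ofReal (Real.log (m t / t)) := by
    intro t ht
    have hpt : ∀ x ∈ Set.Ioi (1:ℝ),
        F (x, t) = Set.indicator (Set.Iio (m t / t)) (fun x => ENNReal.ofReal (1/x)) x := by
      intro x hx
      simp only [hFdef]
      by_cases hmem : x < m t / t
      · have h1 : ((x:ℝ), t) ∈ {q : ℝ × ℝ | q.1 < M q.2 / q.2} := by
          show x < M t / t; rw [hMeq t ht]; exact hmem
        rw [Set.indicator_of_mem h1, Set.indicator_of_mem (Set.mem_Iio.mpr hmem), Pi.one_apply, mul_one]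
      · have h1 : ((x:ℝ), t) ∉ {q : ℝ × ℝ | q.1 < M q.2 / q.2} := by
          show ¬(x < M t / t); rw [hMeq t ht]; exact hmem
        rw [Set.indicator_of_notMem h1, Set.indicator_of_notMem (fun hc => hmem (Set.mem_Iio.mp hc)), mul_zero]
    rw [setLIntegral_congr_fun measurableSet_Ioi hpt,
      lintegral_indicator measurableSet_Iio,
      Measure.restrict_restrict measurableSet_Iio]
    have hset : Set.Iio (m t / t) ∩ Set.Ioi 1 = Set.Ioo 1 (m t / t) := by
      rw [Set.inter_comm, Set.Ioi_inter_Iio]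
    rw [hset]
    exact lintegral_one_div_Ioo (div_pos (hmpos t ht) ht)
  have hIJ : (∫⁻ x in Set.Ioi (1:ℝ), ENNReal.ofReal (σ x / x))
      = ∫⁻ t in Set.Ioi (0:ℝ), ENNReal.ofReal (Real.log (m t / t)) := by
    calc (∫⁻ x in Set.Ioi (1:ℝ), ENNReal.ofReal (σ x / x))
        = ∫⁻ x in Set.Ioi (1:ℝ), ∫⁻ t in Set.Ioi (0:ℝ), F (x, t) :=
          setLIntegral_congr_fun measurableSet_Ioi
            (fun ⦃x⦄ hx => (hinner1 x hx).symm)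
      _ = ∫⁻ t in Set.Ioi (0:ℝ), ∫⁻ x in Set.Ioi (1:ℝ), F (x, t) :=
          lintegral_lintegral_swap hFmeas.aemeasurable
      _ = ∫⁻ t in Set.Ioi (0:ℝ), ENNReal.ofReal (Real.log (m t / t)) :=
          setLIntegral_congr_fun measurableSet_Ioi
            (fun ⦃t⦄ ht => hinner2 t ht)
  -- J finite from (i)
  have hJ_of_i : (∃ δ > (0:ℝ), ∫⁻ x in Set.Ioc (0:ℝ) δ, ENNReal.ofReal (Real.log (m x)) < ⊤) →
      (∫⁻ t in Set.Ioi (0:ℝ), ENNReal.ofReal (Real.log (m t / t))) < ⊤ := by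
    rintro ⟨δ, hδ, hfin⟩
    set δ' := min δ 1 with hδ'def
    have hδ'pos : 0 < δ' := lt_min hδ one_pos
    have hδ'le1 : δ' ≤ 1 := min_le_right _ _
    obtain ⟨T, hT1, hTm⟩ : ∃ T : ℝ, 1 ≤ T ∧ m 1 < T :=
      ⟨max 1 (m 1) + 1, by have := le_max_left 1 (m 1); linarith,
        by have := le_max_right 1 (m 1); linarith⟩
    have hsub : Set.Ioi (0:ℝ) ⊆ (Set.Ioc 0 δ' ∪ Set.Ioc δ' T) ∪ Set.Ioi T := by
      intro t ht
      rcases le_or_gt t δ' with h | h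
      · exact Or.inl (Or.inl ⟨ht, h⟩)
      rcases le_or_gt t T with h2 | h2
      · exact Or.inl (Or.inr ⟨h, h2⟩)
      · exact Or.inr h2
    have hmono : (∫⁻ t in Set.Ioi (0:ℝ), ENNReal.ofReal (Real.log (m t / t)))
        ≤ (∫⁻ t in Set.Ioc 0 δ', ENNReal.ofReal (Real.log (m t / t)))
        + (∫⁻ t in Set.Ioc δ' T, ENNReal.ofReal (Real.log (m t / t)))
        + (∫⁻ t in Set.Ioi T, ENNReal.ofReal (Real.log (m t / t))) := by
      calc (∫⁻ t in Set.Ioi (0:ℝ), ENNReal.ofReal (Real.log (m t / t)))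
          ≤ ∫⁻ t in (Set.Ioc 0 δ' ∪ Set.Ioc δ' T) ∪ Set.Ioi T,
              ENNReal.ofReal (Real.log (m t / t)) := lintegral_mono_set hsub
        _ ≤ ∫⁻ t, ENNReal.ofReal (Real.log (m t / t))
              ∂(volume.restrict (Set.Ioc 0 δ') + volume.restrict (Set.Ioc δ' T)
                + volume.restrict (Set.Ioi T)) := by
            apply lintegral_mono' ?_ le_rfl
            calc volume.restrict ((Set.Ioc 0 δ' ∪ Set.Ioc δ' T) ∪ Set.Ioi T)
                ≤ volume.restrict (Set.Ioc 0 δ' ∪ Set.Ioc δ' T)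
                  + volume.restrict (Set.Ioi T) := Measure.restrict_union_le _ _
              _ ≤ _ := add_le_add (Measure.restrict_union_le _ _) le_rfl
        _ = _ := by rw [lintegral_add_measure, lintegral_add_measure]
    have hp3 : (∫⁻ t in Set.Ioi T, ENNReal.ofReal (Real.log (m t / t))) = 0 := by
      have hz : ∀ t ∈ Set.Ioi T, ENNReal.ofReal (Real.log (m t / t)) = 0 := by
        intro t ht
        have htT : T < t := ht
        have ht0 : (0:ℝ) < t := by linarith
        have h1 : m t ≤ m 1 := hmdec (Set.mem_Ioi.mpr one_pos) (Set.mem_Ioi.mpr ht0)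
          (by linarith)
        have h2 : m t / t ≤ 1 := by
          rw [div_le_one ht0]; linarith
        exact ENNReal.ofReal_eq_zero.mpr
          (Real.log_nonpos (le_of_lt (div_pos (hmpos t ht0) ht0)) h2)
      rw [setLIntegral_congr_fun measurableSet_Ioi hz, lintegral_zero]
    have hp2 : (∫⁻ t in Set.Ioc δ' T, ENNReal.ofReal (Real.log (m t / t))) < ⊤ := by
      have hb : ∀ t ∈ Set.Ioc δ' T, ENNReal.ofReal (Real.log (m t / t))
          ≤ ENNReal.ofReal (Real.log (m δ' / δ')) := by
        intro t ht
        have ht0 : (0:ℝ) < t := lt_trans hδ'pos ht.1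
        apply ENNReal.ofReal_le_ofReal
        apply Real.log_le_log (div_pos (hmpos t ht0) ht0)
        exact div_le_div₀ (le_of_lt (hmpos δ' hδ'pos))
          (hmdec (Set.mem_Ioi.mpr hδ'pos) (Set.mem_Ioi.mpr ht0) ht.1.le) hδ'pos ht.1.le
      calc (∫⁻ t in Set.Ioc δ' T, ENNReal.ofReal (Real.log (m t / t)))
          ≤ ∫⁻ _ in Set.Ioc δ' T, ENNReal.ofReal (Real.log (m δ' / δ')) :=
            lintegral_mono_ae (ae_restrict_of_forall_mem measurableSet_Ioc hb)
        _ = ENNReal.ofReal (Real.log (m δ' / δ')) * volume (Set.Ioc δ' T) :=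
            setLIntegral_const _ _
        _ < ⊤ := by
            rw [Real.volume_Ioc]
            exact ENNReal.mul_lt_top ENNReal.ofReal_lt_top ENNReal.ofReal_lt_top
    have hp1 : (∫⁻ t in Set.Ioc (0:ℝ) δ', ENNReal.ofReal (Real.log (m t / t))) < ⊤ := by
      have hb : ∀ t ∈ Set.Ioc (0:ℝ) δ', ENNReal.ofReal (Real.log (m t / t))
          ≤ ENNReal.ofReal (Real.log (m t)) + ENNReal.ofReal (-Real.log t) := by
        intro t ht
        rw [Real.log_div (ne_of_gt (hmpos t ht.1)) (ne_of_gt ht.1), sub_eq_add_neg]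
        exact ENNReal.ofReal_add_le
      calc (∫⁻ t in Set.Ioc (0:ℝ) δ', ENNReal.ofReal (Real.log (m t / t)))
          ≤ ∫⁻ t in Set.Ioc (0:ℝ) δ',
              (ENNReal.ofReal (Real.log (m t)) + ENNReal.ofReal (-Real.log t)) :=
            lintegral_mono_ae (ae_restrict_of_forall_mem measurableSet_Ioc hb)
        _ = (∫⁻ t in Set.Ioc (0:ℝ) δ', ENNReal.ofReal (Real.log (m t)))
            + ∫⁻ t in Set.Ioc (0:ℝ) δ', ENNReal.ofReal (-Real.log t) :=
            lintegral_add_right _ (Real.measurable_log.neg.ennreal_ofReal)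
        _ ≤ (∫⁻ t in Set.Ioc (0:ℝ) δ, ENNReal.ofReal (Real.log (m t)))
            + ∫⁻ t in Set.Ioc (0:ℝ) 1, ENNReal.ofReal (-Real.log t) :=
            add_le_add (lintegral_mono_set (Set.Ioc_subset_Ioc_right (min_le_left _ _)))
              (lintegral_mono_set (Set.Ioc_subset_Ioc_right hδ'le1))
        _ < ⊤ := ENNReal.add_lt_top.mpr ⟨hfin, lintegral_neglog_finite⟩
    refine lt_of_le_of_lt hmono ?_
    rw [hp3, add_zero]
    exact ENNReal.add_lt_top.mpr ⟨hp1, hp2⟩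
  -- (i) from J finite
  have hi_of_J : (∫⁻ t in Set.Ioi (0:ℝ), ENNReal.ofReal (Real.log (m t / t))) < ⊤ →
      (∃ δ > (0:ℝ), ∫⁻ x in Set.Ioc (0:ℝ) δ, ENNReal.ofReal (Real.log (m x)) < ⊤) := by
    intro hJ
    refine ⟨1, one_pos, ?_⟩
    have hb : ∀ t ∈ Set.Ioc (0:ℝ) 1, ENNReal.ofReal (Real.log (m t))
        ≤ ENNReal.ofReal (Real.log (m t / t)) := by
      intro t ht
      apply ENNReal.ofReal_le_ofReal
      rw [Real.log_div (ne_of_gt (hmpos t ht.1)) (ne_of_gt ht.1)]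
      have := Real.log_nonpos ht.1.le ht.2
      linarith
    calc (∫⁻ t in Set.Ioc (0:ℝ) 1, ENNReal.ofReal (Real.log (m t)))
        ≤ ∫⁻ t in Set.Ioc (0:ℝ) 1, ENNReal.ofReal (Real.log (m t / t)) :=
          lintegral_mono_ae (ae_restrict_of_forall_mem measurableSet_Ioc hb)
      _ ≤ ∫⁻ t in Set.Ioi (0:ℝ), ENNReal.ofReal (Real.log (m t / t)) :=
          lintegral_mono_set Set.Ioc_subset_Ioi_self
      _ < ⊤ := hJ
  -- comparison of K with I
  have hKI : (∫⁻ x in Set.Ioi (1:ℝ), ENNReal.ofReal (lowerLegendre m x / (1 + x ^ 2)))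
      ≤ 2 * ∫⁻ x in Set.Ioi (1:ℝ), ENNReal.ofReal (σ x / x) := by
    rw [← lintegral_const_mul' 2 _ (by norm_num : (2:ℝ≥0∞) ≠ ⊤)]
    apply lintegral_mono_ae (ae_restrict_of_forall_mem measurableSet_Ioi ?_)
    intro x hx
    have hx1 : (1:ℝ) < x := hx
    have hσp := hσpos x
    have h2 := (hsand x hx1).2
    have hreal : lowerLegendre m x / (1 + x ^ 2) ≤ 2 * (σ x / x) := by
      rw [mul_div_assoc', div_le_div_iff₀ (by positivity) (by positivity)]
      nlinarith
    calc ENNReal.ofReal (lowerLegendre m x / (1 + x ^ 2))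
        ≤ ENNReal.ofReal (2 * (σ x / x)) := ENNReal.ofReal_le_ofReal hreal
      _ = 2 * ENNReal.ofReal (σ x / x) := by
          rw [ENNReal.ofReal_mul (by norm_num : (0:ℝ) ≤ 2), ENNReal.ofReal_ofNat]
  have hIK : (∫⁻ x in Set.Ioi (1:ℝ), ENNReal.ofReal (σ x / x))
      ≤ 2 * ∫⁻ x in Set.Ioi (1:ℝ), ENNReal.ofReal (lowerLegendre m x / (1 + x ^ 2)) := by
    rw [← lintegral_const_mul' 2 _ (by norm_num : (2:ℝ≥0∞) ≠ ⊤)]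
    apply lintegral_mono_ae (ae_restrict_of_forall_mem measurableSet_Ioi ?_)
    intro x hx
    have hx1 : (1:ℝ) < x := hx
    have hσp := hσpos x
    have h1 := (hsand x hx1).1
    have hreal : σ x / x ≤ 2 * (lowerLegendre m x / (1 + x ^ 2)) := by
      rw [mul_div_assoc', div_le_div_iff₀ (by positivity) (by positivity)]
      nlinarith [mul_le_mul_of_nonneg_right h1 (by positivity : (0:ℝ) ≤ x),
        mul_nonneg hσp.le (by nlinarith : (0:ℝ) ≤ x ^ 2 - 1)]
    calc ENNReal.ofReal (σ x / x)
        ≤ ENNReal.ofReal (2 * (lowerLegendre m x / (1 + x ^ 2))) :=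
          ENNReal.ofReal_le_ofReal hreal
      _ = 2 * ENNReal.ofReal (lowerLegendre m x / (1 + x ^ 2)) := by
          rw [ENNReal.ofReal_mul (by norm_num : (0:ℝ) ≤ 2), ENNReal.ofReal_ofNat]
  constructor
  · intro hi
    have hJ := hJ_of_i hi
    have hI : (∫⁻ x in Set.Ioi (1:ℝ), ENNReal.ofReal (σ x / x)) < ⊤ := by
      rw [hIJ]; exact hJ
    refine lt_of_le_of_lt hKI ?_
    exact ENNReal.mul_lt_top (by norm_num) hI
  · intro hK
    have hI : (∫⁻ x in Set.Ioi (1:ℝ), ENNReal.ofReal (σ x / x)) < ⊤ :=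
      lt_of_le_of_lt hIK (ENNReal.mul_lt_top (by norm_num) hK)
    exact hi_of_J (by rw [← hIJ]; exact hI)
end
end

section
/- Let G : [0,1] → [0,∞) be increasing and continuous with G(0) = 0, G positive on (0,1], and G(1) < 1. Define m(x) = log(1/G(x)) for x ∈ (0,1] and m(x) = log(1/G(1)) for x > 1, and let m_*(x) = inf_{y>0}(m(y) + x·y) be the lower Legendre envelope of m. Let P_G(x) = ∫₀¹ G(1−r)·r^x dr be the moment function of G. Then there exists x₀ > 0 such that for all x ≥ x₀, exp(−m_*(2x))/(4x) ≤ P_G(x) ≤ exp(−m_*(x)). -/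
open MeasureTheory Set Filter
open scoped Real ENNReal Topology

noncomputable section

/-- The extension m of log(1/G): m(x) = log(1/G(x)) for x ∈ (0,1] and
m(x) = log(1/G(1)) for x > 1. -/
def mExt (G : ℝ → ℝ) (x : ℝ) : ℝ :=
  if x ≤ 1 then Real.log (1 / G x) else Real.log (1 / G 1)

/-- The moment function P_G(x) = ∫₀¹ G(1-r) rˣ dr. -/
def momentFun (G : ℝ → ℝ) (x : ℝ) : ℝ :=
  ∫ r in Set.Ioo (0:ℝ) 1, G (1 - r) * r ^ x

/- ### Auxiliary lemmas -/

theorem exp_neg_le_quartic {t : ℝ} (ht : 0 ≤ t) :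
    Real.exp (-t) ≤ 1 - t + t^2/2 - t^3/6 + t^4/24 := by
  have hS : 1 + t + t^2/2 + t^3/6 + t^4/24 ≤ Real.exp t := by
    have h := Real.sum_le_exp_of_nonneg ht 5
    rw [Finset.sum_range_succ, Finset.sum_range_succ, Finset.sum_range_succ,
      Finset.sum_range_succ, Finset.sum_range_succ] at h
    norm_num [Nat.factorial] at h
    linarith
  have hE := Real.exp_pos t
  have hQS : 1 ≤ (1 - t + t^2/2 - t^3/6 + t^4/24) * (1 + t + t^2/2 + t^3/6 + t^4/24) := by
    nlinarith [pow_nonneg ht 6, pow_nonneg ht 8]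
  have hQpos : 0 < 1 - t + t^2/2 - t^3/6 + t^4/24 := by nlinarith [pow_nonneg ht 4]
  rw [Real.exp_neg, inv_eq_one_div, div_le_iff₀ hE]
  nlinarith [mul_le_mul_of_nonneg_left hS hQpos.le]

theorem log_one_sub_ge {t : ℝ} (ht : 0 ≤ t) (ht2 : t ≤ 1/2) :
    -t - 2*t^2 ≤ Real.log (1 - t) := by
  have h1 : Real.exp (-t - 2*t^2) ≤ 1 - t := by
    have h2 : Real.exp (-(t + 2*t^2)) ≤ 1/(1 + (t + 2*t^2)) := by
      rw [Real.exp_neg, inv_eq_one_div, div_le_div_iff₀ (Real.exp_pos _) (by nlinarith)]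
      nlinarith [Real.add_one_le_exp (t + 2*t^2)]
    have h3 : 1/(1 + (t + 2*t^2)) ≤ 1 - t := by
      rw [div_le_iff₀ (by nlinarith)]
      nlinarith
    calc Real.exp (-t - 2*t^2) = Real.exp (-(t + 2*t^2)) := by ring_nf
      _ ≤ 1 - t := h2.trans h3
  calc -t - 2*t^2 = Real.log (Real.exp (-t - 2*t^2)) := (Real.log_exp _).symm
    _ ≤ Real.log (1 - t) := Real.log_le_log (Real.exp_pos _) h1

theorem exp_four_lt : Real.exp 4 < 60 := by
  have h : Real.exp 1 ≤ 2.7182818286 := Real.exp_one_lt_d9.le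
  have h0 : (0:ℝ) ≤ Real.exp 1 := (Real.exp_pos 1).le
  have h4 : (Real.exp 1)^4 ≤ 2.7182818286^4 := pow_le_pow_left₀ h0 h 4
  calc Real.exp 4 = (Real.exp 1)^4 := by rw [← Real.exp_nat_mul]; norm_num
    _ ≤ 2.7182818286^4 := h4
    _ < 60 := by norm_num

theorem exp_four_thirds_le : Real.exp (4/3) ≤ 98/25 := by
  have h3 : Real.exp (4/3) ^ (3:ℕ) = Real.exp 4 := by
    rw [← Real.exp_nat_mul]; norm_num
  nlinarith [h3, exp_four_lt, Real.exp_pos (4/3), sq_nonneg (Real.exp (4/3) - 98/25),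
    sq_nonneg (Real.exp (4/3) + 98/25)]

variable {G : ℝ → ℝ}

lemma integrand_integrable (hGmono : MonotoneOn G (Set.Icc 0 1))
    (hGcont : ContinuousOn G (Set.Icc 0 1))
    (hG0 : G 0 = 0) {x : ℝ} (hx : 0 ≤ x) :
    IntegrableOn (fun r => G (1 - r) * r ^ x) (Ioo (0:ℝ) 1) := by
  have hmaps : MapsTo (fun r : ℝ => 1 - r) (Ioo (0:ℝ) 1) (Icc (0:ℝ) 1) := by
    intro r hr
    simp only [mem_Icc]
    constructor <;> [linarith [hr.2]; linarith [hr.1]]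
  have hc : ContinuousOn (fun r : ℝ => G (1 - r) * r ^ x) (Ioo (0:ℝ) 1) := by
    apply ContinuousOn.mul
    · exact hGcont.comp ((continuous_const.sub continuous_id).continuousOn) hmaps
    · intro r hr
      exact (Real.continuousAt_rpow_const r x (Or.inl (ne_of_gt hr.1))).continuousWithinAt
  have hmeas : AEStronglyMeasurable (fun r : ℝ => G (1 - r) * r ^ x)
      (volume.restrict (Ioo (0:ℝ) 1)) :=
    hc.aestronglyMeasurable measurableSet_Ioo
  have hconst : IntegrableOn (fun _ : ℝ => G 1) (Ioo (0:ℝ) 1) := by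
    exact integrableOn_const measure_Ioo_lt_top.ne
  refine Integrable.mono' hconst hmeas ?_
  filter_upwards [ae_restrict_mem measurableSet_Ioo] with r hr
  have h1 : (0:ℝ) ≤ G (1 - r) := by
    rw [← hG0]
    exact hGmono ⟨le_refl 0, by norm_num⟩ (hmaps hr) (show (0:ℝ) ≤ 1 - r by linarith [hr.2])
  have h2 : G (1 - r) ≤ G 1 :=
    hGmono (hmaps hr) ⟨by norm_num, le_refl 1⟩ (show (1:ℝ) - r ≤ 1 by linarith [hr.1])
  have h3 : (0:ℝ) ≤ r ^ x := Real.rpow_nonneg hr.1.le x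
  have h4 : r ^ x ≤ 1 := Real.rpow_le_one hr.1.le hr.2.le hx
  rw [Real.norm_eq_abs, abs_of_nonneg (mul_nonneg h1 h3)]
  nlinarith

lemma key_lower (hGmono : MonotoneOn G (Set.Icc 0 1)) (hGcont : ContinuousOn G (Set.Icc 0 1))
    (hG0 : G 0 = 0) {x a b : ℝ} (hx : 0 ≤ x) (ha : 0 < a) (hab : a ≤ b) (hb : b < 1) :
    G (1 - b) * ((b - a) * a ^ x) ≤ momentFun G x := by
  have hsub : Icc a b ⊆ Ioo (0:ℝ) 1 := fun r hr => ⟨lt_of_lt_of_le ha hr.1, lt_of_le_of_lt hr.2 hb⟩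
  have hint := integrand_integrable hGmono hGcont hG0 hx (x := x)
  have hintI : IntegrableOn (fun r => G (1 - r) * r ^ x) (Icc a b) := hint.mono_set hsub
  have hGb0 : (0:ℝ) ≤ G (1 - b) := by
    rw [← hG0]
    exact hGmono ⟨le_refl 0, by norm_num⟩ ⟨by linarith, by linarith⟩ (by linarith)
  have hnonneg : 0 ≤ᵐ[volume.restrict (Ioo (0:ℝ) 1)] fun r => G (1 - r) * r ^ x := by
    filter_upwards [ae_restrict_mem measurableSet_Ioo] with r hr
    have h1 : (0:ℝ) ≤ G (1 - r) := by
      rw [← hG0]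
      exact hGmono ⟨le_refl 0, by norm_num⟩ ⟨by linarith [hr.2], by linarith [hr.1]⟩
        (by linarith [hr.2])
    exact mul_nonneg h1 (Real.rpow_nonneg hr.1.le x)
  calc G (1 - b) * ((b - a) * a ^ x) = ∫ _ in Icc a b, G (1 - b) * a ^ x := by
        rw [setIntegral_const, measureReal_def, Real.volume_Icc, ENNReal.toReal_ofReal (by linarith), smul_eq_mul]
        ring
    _ ≤ ∫ r in Icc a b, G (1 - r) * r ^ x := by
        apply setIntegral_mono_on
          (integrableOn_const (by rw [Real.volume_Icc]; exact ENNReal.ofReal_ne_top))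
          hintI measurableSet_Icc
        intro r hr
        have hr1 : (0:ℝ) < r := lt_of_lt_of_le ha hr.1
        have hG1 : G (1 - b) ≤ G (1 - r) := by
          apply hGmono ⟨by linarith, by linarith⟩ ⟨by linarith [hr.2, hsub hr], by linarith [hr1]⟩
          linarith [hr.2]
        have hax : a ^ x ≤ r ^ x := Real.rpow_le_rpow ha.le hr.1 hx
        have := Real.rpow_nonneg ha.le x
        nlinarith
    _ ≤ momentFun G x := setIntegral_mono_set hint hnonneg (HasSubset.Subset.eventuallyLE hsub)

lemma mExt_eq (G : ℝ → ℝ) (z : ℝ) : mExt G z = -Real.log (G (min z 1)) := by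
  unfold mExt
  split_ifs with h
  · rw [min_eq_left h, one_div, Real.log_inv]
  · rw [min_eq_right (le_of_not_ge h), one_div, Real.log_inv]

lemma mExt_nonneg (hGmono : MonotoneOn G (Set.Icc 0 1))
    (hGpos : ∀ x ∈ Set.Ioc (0:ℝ) 1, 0 < G x) (hG1 : G 1 < 1)
    {z : ℝ} (hz : 0 < z) : 0 ≤ mExt G z := by
  rw [mExt_eq]
  have hw : min z 1 ∈ Set.Ioc (0:ℝ) 1 := ⟨lt_min hz one_pos, min_le_right z 1⟩
  have h1 : G (min z 1) ≤ G 1 :=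
    hGmono ⟨hw.1.le, hw.2⟩ ⟨zero_le_one, le_refl 1⟩ hw.2
  have := Real.log_nonpos (hGpos _ hw).le (by linarith : G (min z 1) ≤ 1)
  linarith

lemma envelope_bddBelow (hGmono : MonotoneOn G (Set.Icc 0 1))
    (hGpos : ∀ x ∈ Set.Ioc (0:ℝ) 1, 0 < G x) (hG1 : G 1 < 1)
    {x : ℝ} (hx : 0 ≤ x) :
    BddBelow ((fun y => mExt G y + x * y) '' Set.Ioi 0) := by
  refine ⟨0, ?_⟩
  rintro _ ⟨y, hy, rfl⟩
  have h1 := mExt_nonneg hGmono hGpos hG1 (mem_Ioi.1 hy)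
  have h2 : 0 ≤ x * y := mul_nonneg hx (le_of_lt (mem_Ioi.1 hy))
  simp only
  linarith

lemma moment_upper (hGmono : MonotoneOn G (Set.Icc 0 1)) (hGcont : ContinuousOn G (Set.Icc 0 1))
    (hG0 : G 0 = 0) (hGpos : ∀ x ∈ Set.Ioc (0:ℝ) 1, 0 < G x) (hG1 : G 1 < 1)
    {x : ℝ} (hx : 0 ≤ x) :
    momentFun G x ≤ Real.exp (-(lowerLegendre (mExt G) x)) := by
  have hbdd := envelope_bddBelow hGmono hGpos hG1 hx
  have hint := integrand_integrable hGmono hGcont hG0 hx (x := x)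
  have hptwise : ∀ r ∈ Ioo (0:ℝ) 1,
      G (1 - r) * r ^ x ≤ Real.exp (-(lowerLegendre (mExt G) x)) := by
    intro r hr
    have hw : (1 - r) ∈ Ioc (0:ℝ) 1 := ⟨by linarith [hr.2], by linarith [hr.1]⟩
    have hGw := hGpos _ hw
    have h1 : lowerLegendre (mExt G) x ≤ mExt G (1 - r) + x * (1 - r) :=
      csInf_le hbdd ⟨1 - r, mem_Ioi.2 hw.1, rfl⟩
    have hm : mExt G (1 - r) = -Real.log (G (1 - r)) := by
      rw [mExt_eq, min_eq_left hw.2]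
    have h2 : Real.exp (-(mExt G (1 - r) + x * (1 - r)))
        = G (1 - r) * Real.exp (-(x * (1 - r))) := by
      rw [hm, neg_add, Real.exp_add, neg_neg, Real.exp_log hGw]
    have h3 : r ^ x ≤ Real.exp (-(x * (1 - r))) := by
      rw [Real.rpow_def_of_pos hr.1]
      apply Real.exp_le_exp.2
      have := Real.log_le_sub_one_of_pos hr.1
      nlinarith
    calc G (1 - r) * r ^ x ≤ G (1 - r) * Real.exp (-(x * (1 - r))) :=
          mul_le_mul_of_nonneg_left h3 hGw.le
      _ = Real.exp (-(mExt G (1 - r) + x * (1 - r))) := h2.symm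
      _ ≤ Real.exp (-(lowerLegendre (mExt G) x)) := Real.exp_le_exp.2 (by linarith)
  calc momentFun G x ≤ ∫ _ in Ioo (0:ℝ) 1, Real.exp (-(lowerLegendre (mExt G) x)) := by
        apply setIntegral_mono_on hint
          (integrableOn_const (by rw [Real.volume_Ioo]; exact ENNReal.ofReal_ne_top))
          measurableSet_Ioo hptwise
    _ = Real.exp (-(lowerLegendre (mExt G) x)) := by
        rw [setIntegral_const, measureReal_def, Real.volume_Ioo, smul_eq_mul]
        norm_num

set_option maxHeartbeats 1000000 in
/-- **Moment function estimates.** For large x,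
exp(-m_*(2x))/(4x) ≤ P_G(x) ≤ exp(-m_*(x)). -/
theorem moment_function_estimates
    (G : ℝ → ℝ)
    (hGmono : MonotoneOn G (Set.Icc 0 1))
    (hGcont : ContinuousOn G (Set.Icc 0 1))
    (hG0 : G 0 = 0)
    (hGpos : ∀ x ∈ Set.Ioc (0:ℝ) 1, 0 < G x)
    (hG1 : G 1 < 1) :
    ∃ x₀ > (0:ℝ), ∀ x ≥ x₀,
      Real.exp (-(lowerLegendre (mExt G) (2 * x))) / (4 * x) ≤ momentFun G x ∧
      momentFun G x ≤ Real.exp (-(lowerLegendre (mExt G) x)) := by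
  have hG12 : 0 < G (1/2) := hGpos _ ⟨by norm_num, by norm_num⟩
  have hG1pos : 0 < G 1 := hGpos _ ⟨by norm_num, le_refl 1⟩
  have hc : (0:ℝ) < 1 + Real.log (2/5) := by
    have h1 : Real.exp (-1) < 2/5 := by
      rw [Real.exp_neg]
      rw [inv_lt_iff_one_lt_mul₀ (Real.exp_pos 1)]
      nlinarith [Real.exp_one_gt_d9]
    have := (Real.lt_log_iff_exp_lt (by norm_num : (0:ℝ) < 2/5)).2 h1
    linarith
  have htend : Tendsto (fun x : ℝ =>
      (2/5) * G (1/2) * (x * Real.exp (x * (1 + Real.log (2/5))))) atTop atTop := by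
    apply Tendsto.const_mul_atTop (by positivity)
    exact Tendsto.atTop_mul_atTop₀ tendsto_id
      (Real.tendsto_exp_atTop.comp (Tendsto.atTop_mul_const hc tendsto_id))
  obtain ⟨x₁, hx₁⟩ := eventually_atTop.1 (htend.eventually_ge_atTop (G 1))
  refine ⟨max 60 x₁, lt_of_lt_of_le (by norm_num) (le_max_left _ _), ?_⟩
  intro x hxx
  have hx60 : (60:ℝ) ≤ x := le_trans (le_max_left _ _) hxx
  have hxx1 : x₁ ≤ x := le_trans (le_max_right _ _) hxx
  have hx0 : (0:ℝ) < x := by linarith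
  refine ⟨?_, moment_upper hGmono hGcont hG0 hGpos hG1 hx0.le⟩
  -- lower bound
  have hhalf : G (1/2) * ((1/10) * ((2:ℝ)/5) ^ x) ≤ momentFun G x := by
    have h := key_lower hGmono hGcont hG0 hx0.le
      (show (0:ℝ) < 2/5 by norm_num) (show (2:ℝ)/5 ≤ 1/2 by norm_num)
      (show (1:ℝ)/2 < 1 by norm_num)
    have e1 : (1:ℝ) - 1/2 = 1/2 := by norm_num
    have e2 : (1:ℝ)/2 - 2/5 = 1/10 := by norm_num
    rw [e1, e2] at h
    exact h
  have hPpos : 0 < momentFun G x := by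
    have : (0:ℝ) < G (1/2) * ((1/10) * ((2:ℝ)/5) ^ x) := by positivity
    linarith
  set P := momentFun G x with hPdef
  have hQpos : (0:ℝ) < 4 * x * P := by positivity
  -- core pointwise claim
  have hcore : ∀ z : ℝ, 0 < z → G (min z 1) * Real.exp (-(2*x*z)) ≤ 4 * x * P := by
    intro z hz
    rcases le_or_gt z (27/(100*x)) with hz1 | hz1
    · -- tiny z
      have hz01 : 27/(100*x) ≤ 1 := by
        rw [div_le_one (by positivity)]; linarith
      have hmin : min z 1 = z := min_eq_left (le_trans hz1 hz01)
      have hGz : G z ≤ G (27/(100*x)) :=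
        hGmono ⟨hz.le, le_trans hz1 hz01⟩ ⟨by positivity, hz01⟩ hz1
      have ha : (0:ℝ) < 1 - 5/(4*x) := by
        have : 5/(4*x) < 1 := by rw [div_lt_one (by positivity)]; linarith
        linarith
      have hab : 1 - 5/(4*x) ≤ 1 - 27/(100*x) := by
        have h5 : 27/(100*x) ≤ 5/(4*x) := by
          rw [div_le_div_iff₀ (by positivity) (by positivity)]
          nlinarith
        linarith
      have hb : 1 - 27/(100*x) < 1 := by
        have : (0:ℝ) < 27/(100*x) := by positivity
        linarith
      have hP := key_lower hGmono hGcont hG0 hx0.le ha hab hb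
      have e1 : (1:ℝ) - (1 - 27/(100*x)) = 27/(100*x) := by ring
      have e2 : (1 - 27/(100*x)) - (1 - 5/(4*x)) = 49/(50*x) := by
        field_simp
        ring
      rw [e1, e2] at hP
      set A := (1 - 5/(4*x)) ^ x with hA
      clear_value A
      have hax : Real.exp (-(5/4) - 25/(8*x)) ≤ A := by
        rw [hA]
        rw [Real.rpow_def_of_pos ha]
        apply Real.exp_le_exp.2
        have hlog := log_one_sub_ge (t := 5/(4*x)) (by positivity)
          (by rw [div_le_div_iff₀ (by positivity) (by norm_num)]; linarith)
        calc -(5/4) - 25/(8*x) = (-(5/(4*x)) - 2*(5/(4*x))^2) * x := by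
              field_simp; ring
          _ ≤ Real.log (1 - 5/(4*x)) * x := mul_le_mul_of_nonneg_right hlog hx0.le
      have hnum : (1:ℝ) ≤ (98/25) * Real.exp (-(5/4) - 25/(8*x)) := by
        have h1 : (5:ℝ)/4 + 25/(8*x) ≤ 4/3 := by
          have : 25/(8*x) ≤ 25/480 := by
            rw [div_le_div_iff₀ (by positivity) (by norm_num)]; linarith
          linarith
        have h2 : Real.exp (5/4 + 25/(8*x)) ≤ 98/25 :=
          le_trans (Real.exp_le_exp.2 h1) exp_four_thirds_le
        have h3 : Real.exp (-(5/4) - 25/(8*x)) * Real.exp (5/4 + 25/(8*x)) = 1 := by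
          rw [← Real.exp_add]; norm_num
        nlinarith [Real.exp_pos (-(5/4) - 25/(8*x))]
      have hGz0nn : (0:ℝ) ≤ G (27/(100*x)) := by
        rw [← hG0]; exact hGmono ⟨le_refl 0, by norm_num⟩ ⟨by positivity, hz01⟩ (by positivity)
      have hexp1 : Real.exp (-(2*x*z)) ≤ 1 := Real.exp_le_one_iff.2 (by nlinarith)
      have hGznn : (0:ℝ) ≤ G z := by
        rw [← hG0]; exact hGmono ⟨le_refl 0, by norm_num⟩ ⟨hz.le, le_trans hz1 hz01⟩ hz.le
      have step : G (27/(100*x)) ≤ 4 * x * P := by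
        have h4 : 4 * x * (G (27/(100*x)) * ((49/(50*x)) * A))
            = G (27/(100*x)) * ((98/25) * A) := by
          field_simp; ring
        have h5 : (1:ℝ) ≤ (98/25) * A := by
          nlinarith [Real.exp_pos (-(5/4) - 25/(8*x))]
        have h6 : G (27/(100*x)) * 1 ≤ G (27/(100*x)) * ((98/25) * A) :=
          mul_le_mul_of_nonneg_left h5 hGz0nn
        have h7 : 4 * x * (G (27/(100*x)) * ((49/(50*x)) * A)) ≤ 4 * x * P :=
          mul_le_mul_of_nonneg_left hP (by positivity)
        rw [h4] at h7
        linarith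
      rw [hmin]
      calc G z * Real.exp (-(2*x*z)) ≤ G z * 1 := mul_le_mul_of_nonneg_left hexp1 hGznn
        _ = G z := mul_one _
        _ ≤ G (27/(100*x)) := hGz
        _ ≤ 4 * x * P := step
    · rcases le_or_gt z (1/2) with hz2 | hz2
      · -- middle z
        have hmin : min z 1 = z := min_eq_left (by linarith)
        have hfz : 1/(4*x) ≤ (1 - z) - Real.exp (-(2*z)) := by
          have hq := exp_neg_le_quartic (t := 2*z) (by positivity)
          rcases le_or_gt (1/x) z with h | h
          · have hg : z/4 ≤ z - 2*z^2 + (4/3)*z^3 - (2/3)*z^4 := by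
              nlinarith [mul_nonneg (mul_nonneg hz.le (by linarith : (0:ℝ) ≤ 1 - 2*z))
                (by nlinarith : (0:ℝ) ≤ z^2/3 - z/2 + 3/4)]
            have h14 : 1/(4*x) ≤ z/4 := by
              rw [div_le_div_iff₀ (by positivity) (by norm_num)]
              rw [div_le_iff₀ (by positivity)] at h
              nlinarith
            nlinarith
          · have hz60 : z ≤ 1/60 := by
              have : (1:ℝ)/x ≤ 1/60 := by
                rw [div_le_div_iff₀ (by positivity) (by norm_num)]; linarith
              linarith
            have h1 : 1/(4*x) ≤ (29/30) * (27/(100*x)) := by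
              rw [show (29:ℝ)/30 * (27/(100*x)) = 783/(3000*x) by ring,
                div_le_div_iff₀ (by positivity) (by positivity)]
              nlinarith
            have h2 : (29/30) * (27/(100*x)) ≤ (29/30) * z := by nlinarith
            have h3 : (29/30) * z ≤ z - 2*z^2 := by nlinarith
            nlinarith
        have ha : (0:ℝ) < Real.exp (-(2*z)) := Real.exp_pos _
        have hab : Real.exp (-(2*z)) ≤ 1 - z := by
          have : (0:ℝ) < 1/(4*x) := by positivity
          linarith
        have hb : 1 - z < 1 := by linarith
        have hP := key_lower hGmono hGcont hG0 hx0.le ha hab hb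
        have e1 : (1:ℝ) - (1 - z) = z := by ring
        rw [e1] at hP
        have hax : Real.exp (-(2*z)) ^ x = Real.exp (-(2*x*z)) := by
          rw [Real.rpow_def_of_pos (Real.exp_pos _), Real.log_exp]
          ring_nf
        rw [hax] at hP
        have hGznn : (0:ℝ) ≤ G z := by
          rw [← hG0]; exact hGmono ⟨le_refl 0, by norm_num⟩ ⟨hz.le, by linarith⟩ hz.le
        rw [hmin]
        have hexp : (0:ℝ) < Real.exp (-(2*x*z)) := Real.exp_pos _
        rw [← hPdef] at hP
        have h1 : G z * Real.exp (-(2*x*z)) * (1/(4*x)) ≤ P := by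
          calc G z * Real.exp (-(2*x*z)) * (1/(4*x))
              = G z * ((1/(4*x)) * Real.exp (-(2*x*z))) := by ring
            _ ≤ G z * ((1 - z - Real.exp (-(2*z))) * Real.exp (-(2*x*z))) := by
                apply mul_le_mul_of_nonneg_left _ hGznn
                exact mul_le_mul_of_nonneg_right hfz hexp.le
            _ ≤ P := hP
        rw [mul_one_div, div_le_iff₀ (by positivity)] at h1
        linarith
      · -- large z
        have hGle : G (min z 1) ≤ G 1 :=
          hGmono ⟨(lt_min hz one_pos).le, min_le_right z 1⟩ ⟨zero_le_one, le_refl 1⟩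
            (min_le_right z 1)
        have hGmnn : (0:ℝ) ≤ G (min z 1) := (hGpos _ ⟨lt_min hz one_pos, min_le_right z 1⟩).le
        have hexp : Real.exp (-(2*x*z)) ≤ Real.exp (-x) := by
          apply Real.exp_le_exp.2; nlinarith
        have hx1b := hx₁ x hxx1
        have h25 : ((2:ℝ)/5) ^ x = Real.exp (Real.log (2/5) * x) :=
          Real.rpow_def_of_pos (by norm_num) x
        have hkey : G 1 * Real.exp (-x) ≤ 4 * x * P := by
          have h5 : Real.exp (x * (1 + Real.log (2/5))) * Real.exp (-x)
              = ((2:ℝ)/5) ^ x := by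
            rw [← Real.exp_add, h25]; ring_nf
          have h6 : G 1 * Real.exp (-x)
              ≤ (2/5) * G (1/2) * (x * Real.exp (x * (1 + Real.log (2/5)))) * Real.exp (-x) :=
            mul_le_mul_of_nonneg_right hx1b (Real.exp_pos _).le
          have h7 : (2/5) * G (1/2) * (x * Real.exp (x * (1 + Real.log (2/5)))) * Real.exp (-x)
              = 4 * x * (G (1/2) * ((1/10) * ((2:ℝ)/5) ^ x)) := by
            rw [← h5]; ring
          have h8 : 4 * x * (G (1/2) * ((1/10) * ((2:ℝ)/5) ^ x)) ≤ 4 * x * P := by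
            apply mul_le_mul_of_nonneg_left hhalf (by positivity)
          linarith
        calc G (min z 1) * Real.exp (-(2*x*z)) ≤ G 1 * Real.exp (-x) := by
              apply mul_le_mul hGle hexp (Real.exp_pos _).le hG1pos.le
          _ ≤ 4 * x * P := hkey
  -- from pointwise claim to the envelope
  have hll : -(Real.log (4 * x * P)) ≤ lowerLegendre (mExt G) (2*x) := by
    unfold lowerLegendre
    refine le_csInf ⟨_, ⟨1, mem_Ioi.2 one_pos, rfl⟩⟩ ?_
    rintro u ⟨z, hz, rfl⟩
    have hz' := mem_Ioi.1 hz
    have hGw : 0 < G (min z 1) := hGpos _ ⟨lt_min hz' one_pos, min_le_right _ _⟩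
    have h := hcore z hz'
    simp only
    rw [mExt_eq]
    have hlog : Real.log (G (min z 1) * Real.exp (-(2*x*z))) ≤ Real.log (4 * x * P) :=
      Real.log_le_log (by positivity) h
    rw [Real.log_mul (ne_of_gt hGw) (Real.exp_ne_zero _), Real.log_exp] at hlog
    linarith
  have hfin : Real.exp (-(lowerLegendre (mExt G) (2*x))) ≤ 4 * x * P := by
    calc Real.exp (-(lowerLegendre (mExt G) (2*x))) ≤ Real.exp (Real.log (4 * x * P)) :=
          Real.exp_le_exp.2 (by linarith)
      _ = 4 * x * P := Real.exp_log hQpos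
  rw [div_le_iff₀ (by positivity)]
  linarith
end
end
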